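/- arXiv:1711.07100 — 5 statements merged into one kernel-verified Lean document; each statement's English description precedes it below -/
import Mathlib

section
/- Fix an integer p ≥ 1 and a real number x. Define polynomials Ω_n^(p)(y) in the variable y by Ω_0^(p)(y) = 1, Ω_1^(p)(y) = y − x + p/2, and, for n ≥ 1, Ω_{n+1}^(p)(y) = (y − x + p/2)·Ω_n^(p)(y) + (n(n+p−1)/4)·Ω_{n−1}^(p)(y). Then the Ω_n^(p) are the monic orthogonal polynomials with respect to the sequence E_n^(p)(x): for all integers r, n with 0 ≤ r < n, L(y^r · Ω_n^(p)(y)) = 0. -/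
open Polynomial

open scoped Nat
open Finset

lemma coeff_eq_zero_of_hasSum_zero (c : ℕ → ℂ)
    (h : ∀ z : ℂ, ‖z‖ < 1 → HasSum (fun n => c n * z ^ n) 0) : ∀ n, c n = 0 := by
  intro n
  set P : FormalMultilinearSeries ℂ ℂ ℂ := FormalMultilinearSeries.ofScalars ℂ c with hP
  have hball : HasFPowerSeriesOnBall (0 : ℂ → ℂ) P 0 1 := by
    refine ⟨?_, one_pos, ?_⟩
    · refine ENNReal.le_of_forall_nnreal_lt fun r hr => ?_
      have hr1 : (r : ℝ) < 1 := by exact_mod_cast hr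
      have hs : Summable fun n => c n * (r : ℂ) ^ n := by
        refine (h (r : ℂ) ?_).summable
        simpa using hr1
      have hs' : Summable fun n => ‖c n‖ * (r : ℝ) ^ n := by
        have := (summable_norm_iff.mpr hs)
        simpa [norm_mul, norm_pow] using this
      refine P.le_radius_of_summable ?_
      refine hs'.of_nonneg_of_le (fun n => by positivity) fun n => ?_
      have hn : ‖P n‖ ≤ ‖c n‖ := by
        rw [hP]; exact le_of_eq (FormalMultilinearSeries.ofScalars_norm ℂ c n)
      have : (0:ℝ) ≤ (r:ℝ) ^ n := by positivity
      exact mul_le_mul_of_nonneg_right hn this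
    · intro y hy
      have hy1 : ‖y‖ < 1 := by
        simpa [enorm_eq_nnnorm, ← NNReal.coe_lt_one] using hy
      have h2 := h y hy1
      have heq : (fun m => P m fun _ => y) = fun m => c m * y ^ m := by
        funext m
        rw [hP, FormalMultilinearSeries.ofScalars_apply_eq, smul_eq_mul]
      rw [heq]
      simpa using h2
  have h3 := hball.hasFPowerSeriesAt.apply_eq_zero n 1
  rw [hP, FormalMultilinearSeries.ofScalars_apply_eq, smul_eq_mul] at h3
  simpa using h3




lemma exp_add_one_ne_zero' {z : ℂ} (hz : ‖z‖ < 1) : Complex.exp z + 1 ≠ 0 := by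
  intro h
  have hexp : Complex.exp z = -1 := by linear_combination h
  have habs : ‖Complex.exp z‖ = 1 := by rw [hexp]; simp
  have hre : z.re = 0 := by
    rw [Complex.norm_exp, Real.exp_eq_one_iff] at habs
    exact habs
  have him : |z.im| < 1 := lt_of_le_of_lt
    ((Complex.abs_im_le_norm z).trans_eq rfl) hz
  have hcos : 0 < Real.cos z.im := by
    refine Real.cos_pos_of_mem_Ioo ⟨?_, ?_⟩ <;>
      cases abs_lt.mp him <;> nlinarith [Real.pi_gt_three]
  have hre2 : (Complex.exp z).re = Real.cos z.im := by
    rw [Complex.exp_re, hre, Real.exp_zero, one_mul]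
  rw [hexp] at hre2
  simp at hre2
  nlinarith

lemma myCauchyProduct {u v : ℕ → ℂ} {U V : ℂ} (hu : HasSum u U) (hv : HasSum v V) :
    HasSum (fun n => ∑ k ∈ Finset.range (n + 1), u k * v (n - k)) (U * V) := by
  have nu := summable_norm_iff.mpr hu.summable
  have nv := summable_norm_iff.mpr hv.summable
  have hs := (summable_norm_sum_mul_range_of_summable_norm nu nv).of_norm
  have h2 := hs.hasSum
  rwa [← tsum_mul_tsum_eq_tsum_sum_range_of_summable_norm nu nv, hu.tsum_eq, hv.tsum_eq] at h2

lemma euler_star (p : ℕ) (hp : 1 ≤ p) (x : ℝ) (E : ℕ → ℝ)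
    (hE : ∀ z : ℂ, ‖z‖ < 1 →
      HasSum (fun n : ℕ => (E n : ℂ) * z ^ n / (n.factorial : ℂ))
        ((2 / (Complex.exp z + 1)) ^ p * Complex.exp (x * z))) :
    ∀ n : ℕ, E (n+1) + ∑ k ∈ Finset.range (n+1), (n.choose k : ℝ) * E (k+1)
      = x * E n + (x - (p:ℝ)) * ∑ k ∈ Finset.range (n+1), (n.choose k : ℝ) * E k := by
  set f : ℂ → ℂ := fun z => (2 / (Complex.exp z + 1)) ^ p * Complex.exp (x * z) with hf
  set g : ℂ → ℂ := fun z =>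
    ((x : ℂ) - p * Complex.exp z / (Complex.exp z + 1)) * f z with hg
  have hfd : ∀ z : ℂ, ‖z‖ < 1 → DifferentiableAt ℂ f z := by
    intro z hz
    have h1 : DifferentiableAt ℂ (fun z : ℂ => 2 / (Complex.exp z + 1)) z :=
      (differentiableAt_const 2).div ((Complex.differentiable_exp z).add
        (differentiableAt_const 1)) (exp_add_one_ne_zero' hz)
    exact (h1.pow p).mul (((differentiableAt_id.const_mul (x:ℂ))).cexp)
  have hgd : ∀ z : ℂ, ‖z‖ < 1 → DifferentiableAt ℂ g z := by
    intro z hz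
    exact ((differentiableAt_const _).sub
      (((Complex.differentiable_exp z).const_mul (p:ℂ)).div
        ((Complex.differentiable_exp z).add (differentiableAt_const 1))
        (exp_add_one_ne_zero' hz))).mul (hfd z hz)
  have hderiv : ∀ z : ℂ, ‖z‖ < 1 → HasDerivAt f (g z) z := by
    intro z hz
    have hne := exp_add_one_ne_zero' hz
    obtain ⟨q, rfl⟩ : ∃ q, p = q + 1 := ⟨p - 1, by omega⟩
    have h1 : HasDerivAt (fun z : ℂ => Complex.exp z + 1) (Complex.exp z) z := by
      simpa using (Complex.hasDerivAt_exp z).add_const 1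
    have h2 : HasDerivAt (fun z : ℂ => 2 / (Complex.exp z + 1))
        ((0 * (Complex.exp z + 1) - 2 * Complex.exp z) / (Complex.exp z + 1) ^ 2) z :=
      (hasDerivAt_const z 2).div h1 hne
    have h3 := h2.pow (q + 1)
    have hbase : HasDerivAt (fun z : ℂ => (x:ℂ) * z) (x:ℂ) z := by
      simpa using (hasDerivAt_id z).const_mul (x:ℂ)
    have h4 := hbase.cexp
    have h5 := h3.mul h4
    convert h5 using 1
    · rfl
    · rfl
    · rfl
    rw [hg, hf]
    have hq1 : (q + 1) - 1 = q := by omega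
    rw [hq1]
    simp only [Pi.pow_apply]
    have hinv : (Complex.exp z + 1)⁻¹ * (Complex.exp z + 1) = 1 := inv_mul_cancel₀ hne
    field_simp
    push_cast
    linear_combination (-(Complex.exp z) * ((q : ℂ) + 1) * ((1 + Complex.exp z)⁻¹) ^ q * 2 ^ (q + 1)) * hinv
  have hf_sum : ∀ z : ℂ, ‖z‖ < 1 →
      HasSum (fun n => ((E n : ℂ) / (n ! : ℂ)) * z ^ n) (f z) := by
    intro z hz
    refine HasSum.congr_fun (hE z hz) fun n => ?_
    ring
  have hftay : ∀ z : ℂ, ‖z‖ < 1 →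
      HasSum (fun n => (((n ! : ℂ))⁻¹ * iteratedDeriv n f 0) * z ^ n) (f z) := by
    intro z hz
    have hdf : DifferentiableOn ℂ f (Metric.ball 0 1) := fun w hw =>
      (hfd w (by simpa using hw)).differentiableWithinAt
    have h := Complex.hasSum_taylorSeries_on_ball hdf (by simpa using hz)
    refine HasSum.congr_fun h fun n => ?_
    simp only [sub_zero, smul_eq_mul]
    ring
  have hEi : ∀ n, iteratedDeriv n f 0 = ((E n : ℝ) : ℂ) := by
    have h0 := coeff_eq_zero_of_hasSum_zero
      (fun n => ((E n : ℂ) / (n ! : ℂ)) - ((n ! : ℂ))⁻¹ * iteratedDeriv n f 0)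
      (fun z hz => by
        have h := (hf_sum z hz).sub (hftay z hz)
        simpa [sub_mul] using h)
    intro n
    have h1 := h0 n
    have hn : ((n ! : ℕ) : ℂ) ≠ 0 := by exact_mod_cast n.factorial_ne_zero
    rw [div_eq_mul_inv, sub_eq_zero] at h1
    have h2 : (E n : ℂ) * ((n ! : ℂ))⁻¹ = iteratedDeriv n f 0 * ((n ! : ℂ))⁻¹ := by
      rw [h1]; ring
    exact (mul_right_cancel₀ (inv_ne_zero hn) h2).symm
  have hg_sum : ∀ z : ℂ, ‖z‖ < 1 →
      HasSum (fun n => ((E (n+1) : ℂ) / (n ! : ℂ)) * z ^ n) (g z) := by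
    intro z hz
    have hdg : DifferentiableOn ℂ g (Metric.ball 0 1) := fun w hw =>
      (hgd w (by simpa using hw)).differentiableWithinAt
    have h := Complex.hasSum_taylorSeries_on_ball hdg (by simpa using hz)
    refine HasSum.congr_fun h fun n => ?_
    have hgi : iteratedDeriv n g 0 = ((E (n+1) : ℝ) : ℂ) := by
      have heq : g =ᶠ[nhds (0:ℂ)] deriv f := by
        refine Filter.eventuallyEq_of_mem (Metric.ball_mem_nhds (0:ℂ) one_pos) ?_
        intro w hw
        exact ((hderiv w (by simpa using hw)).deriv).symm
      rw [Filter.EventuallyEq.iteratedDeriv_eq n heq, ← iteratedDeriv_succ', hEi]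
    rw [hgi]
    simp only [sub_zero, smul_eq_mul]
    ring
  set γ : ℕ → ℂ := fun n =>
    ((∑ k ∈ Finset.range (n+1), (E (k+1) : ℂ) / ((k ! : ℂ) * ((n-k)! : ℂ)))
        + (E (n+1) : ℂ) / (n ! : ℂ))
    - ((x:ℂ) * (∑ k ∈ Finset.range (n+1), (E k : ℂ) / ((k ! : ℂ) * ((n-k)! : ℂ)))
        + (x:ℂ) * ((E n : ℂ) / (n ! : ℂ)))
    + (p:ℂ) * (∑ k ∈ Finset.range (n+1), (E k : ℂ) / ((k ! : ℂ) * ((n-k)! : ℂ))) with hγdef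
  have hγ : ∀ n, γ n = 0 := by
    refine coeff_eq_zero_of_hasSum_zero γ fun z hz => ?_
    have hexp : HasSum (fun m => z ^ m / (m ! : ℂ)) (Complex.exp z) := by
      rw [Complex.exp_eq_exp_ℂ]
      exact NormedSpace.expSeries_div_hasSum_exp z
    have ha := hf_sum z hz
    have hb := hg_sum z hz
    have h1 := myCauchyProduct hb hexp
    have h2 := myCauchyProduct ha hexp
    have hcomb := ((h1.add hb).sub ((h2.mul_left (x:ℂ)).add (ha.mul_left (x:ℂ)))).add
      (h2.mul_left (p:ℂ))
    have hval : ((g z * Complex.exp z + g z) -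
        ((x:ℂ) * (f z * Complex.exp z) + (x:ℂ) * f z)) + (p:ℂ) * (f z * Complex.exp z) = 0 := by
      rw [hg]
      field_simp [exp_add_one_ne_zero' hz]
      ring
    rw [hval] at hcomb
    refine HasSum.congr_fun hcomb fun n => ?_
    have hs1 : ∀ (F : ℕ → ℝ), (∑ k ∈ Finset.range (n+1),
        ((F k : ℂ) / (k ! : ℂ) * z ^ k) * (z ^ (n-k) / ((n-k)! : ℂ)))
        = (∑ k ∈ Finset.range (n+1), (F k : ℂ) / ((k ! : ℂ) * ((n-k)! : ℂ))) * z ^ n := by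
      intro F
      rw [Finset.sum_mul]
      refine Finset.sum_congr rfl fun k hk => ?_
      have hkn : k ≤ n := Nat.lt_succ_iff.mp (Finset.mem_range.mp hk)
      have hzz : z ^ k * z ^ (n - k) = z ^ n := by
        rw [← pow_add, Nat.add_sub_cancel' hkn]
      field_simp
      rw [← hzz]
      ring
    simp only [hγdef]
    simp only [hs1]
    ring
  intro n
  have hγn := hγ n
  rw [hγdef] at hγn
  have hnfac : ((n ! : ℕ) : ℂ) ≠ 0 := by exact_mod_cast n.factorial_ne_zero
  have hmul : ∀ (F : ℕ → ℝ), (n ! : ℂ) * (∑ k ∈ Finset.range (n+1),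
      (F k : ℂ) / ((k ! : ℂ) * ((n-k)! : ℂ)))
      = ∑ k ∈ Finset.range (n+1), (n.choose k : ℂ) * (F k : ℂ) := by
    intro F
    rw [Finset.mul_sum]
    refine Finset.sum_congr rfl fun k hk => ?_
    have hkn : k ≤ n := Nat.lt_succ_iff.mp (Finset.mem_range.mp hk)
    rw [Nat.cast_choose ℂ hkn]
    have h1 : ((k ! : ℕ) : ℂ) ≠ 0 := by exact_mod_cast k.factorial_ne_zero
    have h2 : (((n - k)! : ℕ) : ℂ) ≠ 0 := by exact_mod_cast (n-k).factorial_ne_zero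
    field_simp
  have hgoal : ((E (n+1) : ℂ) + ∑ k ∈ Finset.range (n+1), (n.choose k : ℂ) * (E (k+1) : ℂ))
      = (x : ℂ) * (E n : ℂ)
        + ((x : ℂ) - (p:ℂ)) * ∑ k ∈ Finset.range (n+1), (n.choose k : ℂ) * (E k : ℂ) := by
    have := congrArg (fun w => (n ! : ℂ) * w) hγn
    simp only [mul_zero] at this
    rw [mul_add, mul_sub, mul_add, mul_add] at this
    rw [hmul (fun k => E (k+1))] at this
    rw [show (n ! : ℂ) * ((p:ℂ) * (∑ k ∈ Finset.range (n+1),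
        (E k : ℂ) / ((k ! : ℂ) * ((n-k)! : ℂ)))) = (p:ℂ) * ((n ! : ℂ) * (∑ k ∈ Finset.range (n+1),
        (E k : ℂ) / ((k ! : ℂ) * ((n-k)! : ℂ)))) from by ring, hmul E] at this
    rw [show (n ! : ℂ) * ((x:ℂ) * (∑ k ∈ Finset.range (n+1),
        (E k : ℂ) / ((k ! : ℂ) * ((n-k)! : ℂ)))) = (x:ℂ) * ((n ! : ℂ) * (∑ k ∈ Finset.range (n+1),
        (E k : ℂ) / ((k ! : ℂ) * ((n-k)! : ℂ)))) from by ring, hmul E] at this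
    have hdiv : (n ! : ℂ) * ((E (n+1) : ℂ) / (n ! : ℂ)) = (E (n+1) : ℂ) := by
      field_simp
    have hdiv2 : (n ! : ℂ) * ((x:ℂ) * ((E n : ℂ) / (n ! : ℂ))) = (x:ℂ) * (E n : ℂ) := by
      field_simp
    rw [hdiv, show (n ! : ℂ) * ((x:ℂ) * ((E n : ℂ) / (n ! : ℂ)) ) = (x:ℂ) * (E n : ℂ) from hdiv2] at this
    linear_combination this
  exact_mod_cast hgoal



lemma Hq_of_star (p : ℕ) (x : ℝ) (E : ℕ → ℝ) (L : Polynomial ℝ →ₗ[ℝ] ℝ)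
    (hL : ∀ k : ℕ, L (X ^ k) = E k)
    (hstar : ∀ n : ℕ, E (n+1) + ∑ k ∈ Finset.range (n+1), (n.choose k : ℝ) * E (k+1)
      = x * E n + (x - (p:ℝ)) * ∑ k ∈ Finset.range (n+1), (n.choose k : ℝ) * E k) :
    ∀ q : Polynomial ℝ, L ((X - C x) * q + (X - C x + C (p:ℝ)) * q.comp (X + 1)) = 0 := by
  intro q
  induction q using Polynomial.induction_on' with
  | add f g hf hg =>
    have h : (X - C x) * (f + g) + (X - C x + C (p:ℝ)) * (f+g).comp (X+1)
        = ((X - C x) * f + (X - C x + C (p:ℝ)) * f.comp (X+1))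
          + ((X - C x) * g + (X - C x + C (p:ℝ)) * g.comp (X+1)) := by
      rw [add_comp]; ring
    rw [h, map_add, hf, hg, add_zero]
  | monomial n a =>
    have hm : (monomial n a : Polynomial ℝ) = C a * X ^ n := (C_mul_X_pow_eq_monomial).symm
    have hcomp : ((C a * X ^ n : Polynomial ℝ)).comp (X+1) = C a * (X+1)^n := by
      simp [mul_comp, pow_comp]
    rw [hm, hcomp]
    have hfac : (X - C x) * (C a * X^n) + (X - C x + C (p:ℝ)) * (C a * (X+1)^n)
        = a • ((X - C x) * X^n + (X - C x + C (p:ℝ)) * (X+1)^n) := by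
      rw [Polynomial.smul_eq_C_mul]; ring
    rw [hfac, map_smul, smul_eq_mul]
    have hbin : ((X + 1 : Polynomial ℝ))^n
        = ∑ k ∈ Finset.range (n+1), C ((n.choose k : ℝ)) * X ^ k := by
      rw [add_pow]
      refine Finset.sum_congr rfl fun k hk => ?_
      rw [one_pow, mul_one, show ((n.choose k : ℕ) : Polynomial ℝ) = C ((n.choose k : ℝ)) from
        by norm_num]
      ring
    have hT1 : L ((X - C x) * X^n) = E (n+1) - x * E n := by
      have e1 : (X - C x) * (X:Polynomial ℝ)^n = X^(n+1) - x • X^n := by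
        rw [Polynomial.smul_eq_C_mul]; ring
      rw [e1, map_sub, map_smul, hL, hL, smul_eq_mul]
    have hT2 : L ((X - C x + C (p:ℝ)) * ((X+1):Polynomial ℝ)^n)
        = (∑ k ∈ Finset.range (n+1), (n.choose k:ℝ) * E (k+1))
          + ((p:ℝ) - x) * (∑ k ∈ Finset.range (n+1), (n.choose k:ℝ) * E k) := by
      have e2 : (X - C x + C (p:ℝ)) * ((X+1):Polynomial ℝ)^n
          = ∑ k ∈ Finset.range (n+1),
            ((n.choose k:ℝ) • X^(k+1) + ((n.choose k:ℝ)*((p:ℝ) - x)) • X^k) := by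
        rw [hbin, Finset.mul_sum]
        refine Finset.sum_congr rfl fun k hk => ?_
        simp only [Polynomial.smul_eq_C_mul, C_mul, C_sub]
        ring
      rw [e2, map_sum]
      have e3 : ∀ k ∈ Finset.range (n+1),
          L ((n.choose k:ℝ) • X^(k+1) + ((n.choose k:ℝ)*((p:ℝ) - x)) • X^k)
          = (n.choose k:ℝ) * E (k+1) + ((n.choose k:ℝ)*((p:ℝ) - x)) * E k := by
        intro k _
        rw [map_add, map_smul, map_smul, hL, hL, smul_eq_mul, smul_eq_mul]
      rw [Finset.sum_congr rfl e3, Finset.sum_add_distrib]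
      congr 1
      rw [Finset.mul_sum]
      exact Finset.sum_congr rfl fun k _ => by ring
    rw [map_add, hT1, hT2]
    have h := hstar n
    linear_combination a * h



lemma ortho_of_star (p : ℕ) (x : ℝ) (L : Polynomial ℝ →ₗ[ℝ] ℝ)
    (Ω : ℕ → Polynomial ℝ)
    (hΩ0 : Ω 0 = 1)
    (hΩ1 : Ω 1 = X - C x + C ((p : ℝ) / 2))
    (hΩrec : ∀ n : ℕ, 1 ≤ n →
      Ω (n + 1) = (X - C x + C ((p : ℝ) / 2)) * Ω n
        + C ((n : ℝ) * ((n : ℝ) + (p : ℝ) - 1) / 4) * Ω (n - 1))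
    (Hq : ∀ q : Polynomial ℝ,
      L ((X - C x) * q + (X - C x + C (p:ℝ)) * q.comp (X + 1)) = 0) :
    ∀ r n : ℕ, r < n → L (X ^ r * Ω n) = 0 := by
  classical
  set lam : ℕ → ℝ := fun n => (n : ℝ) * ((n : ℝ) + (p : ℝ) - 1) / 4 with hlam
  set W : Polynomial ℝ := X - C x + C ((p : ℝ) / 2) with hW
  set A : Polynomial ℝ := X - C x + C (p:ℝ) with hA
  set B : Polynomial ℝ := C x - X with hB
  set Dop : Polynomial ℝ → Polynomial ℝ :=
    fun q => A * q.comp (X + 1) + B * q.comp (X - 1) with hDop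
  set Dp : Polynomial ℝ → Polynomial ℝ :=
    fun q => A * q.comp (X + 1) - B * q.comp (X - 1) with hDp
  have hWc1 : W.comp (X + 1) = W + 1 := by
    rw [hW]; simp only [sub_comp, add_comp, X_comp, C_comp]; ring
  have hWc2 : W.comp (X - 1) = W - 1 := by
    rw [hW]; simp only [sub_comp, add_comp, X_comp, C_comp]; ring
  have hΩ1W : Ω 1 = W := hΩ1
  have hDopAdd : ∀ u v : Polynomial ℝ, Dop (u + v) = Dop u + Dop v := by
    intro u v; simp only [hDop, add_comp]; ring
  have hDpAdd : ∀ u v : Polynomial ℝ, Dp (u + v) = Dp u + Dp v := by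
    intro u v; simp only [hDp, add_comp]; ring
  have hDopC : ∀ (a : ℝ) (u : Polynomial ℝ), Dop (C a * u) = C a * Dop u := by
    intro a u; simp only [hDop, mul_comp, C_comp]; ring
  have hDpC : ∀ (a : ℝ) (u : Polynomial ℝ), Dp (C a * u) = C a * Dp u := by
    intro a u; simp only [hDp, mul_comp, C_comp]; ring
  have hDopW : ∀ u : Polynomial ℝ, Dop (W * u) = W * Dop u + Dp u := by
    intro u; simp only [hDop, hDp, mul_comp, hWc1, hWc2]; ring
  have hDpW : ∀ u : Polynomial ℝ, Dp (W * u) = W * Dp u + Dop u := by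
    intro u; simp only [hDop, hDp, mul_comp, hWc1, hWc2]; ring
  have hlam0 : lam 0 = 0 := by simp [hlam]
  have hAB : A + B = C (p:ℝ) := by rw [hA, hB]; ring
  have hCp : (C (p:ℝ) : Polynomial ℝ) = C ((p:ℝ)/2) + C ((p:ℝ)/2) := by
    rw [← C_add]; norm_num
  have hC2 : (C (2:ℝ) : Polynomial ℝ) = 2 := map_ofNat C 2
  have hC4 : (C (4:ℝ) : Polynomial ℝ) = 4 := map_ofNat C 4
  have hABm : A - B = 2 * W := by
    rw [hA, hB, hW, hCp]; ring
  have hrec2 : ∀ n : ℕ, Ω (n+2) = W * Ω (n+1) + C (lam (n+1)) * Ω n := by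
    intro n
    have h := hΩrec (n+1) (by omega)
    simpa only [Nat.add_sub_cancel, ← hW, ← hlam] using h
  have hrecW : ∀ n : ℕ, W * Ω n = Ω (n+1) - C (lam n) * Ω (n-1) := by
    intro n
    cases n with
    | zero => simp [hΩ0, hΩ1W, hlam0]
    | succ m => rw [hrec2 m]; simp only [Nat.add_sub_cancel]; ring
  set ee : ℕ → ℝ := fun k => 2*(k:ℝ)+(p:ℝ) with hee
  have keys : ∀ m : ℕ,
      (Dop (Ω m) = C (ee m) * Ω m
        ∧ Dp (Ω m) = 2 * Ω (m+1) + 2 * C (lam m) * Ω (m-1))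
      ∧ (Dop (Ω (m+1)) = C (ee (m+1)) * Ω (m+1)
        ∧ Dp (Ω (m+1)) = 2 * Ω (m+2) + 2 * C (lam (m+1)) * Ω m) := by
    have hee1 : ∀ k : ℕ, C (ee (k+1)) = C (ee k) + 2 := by
      intro k
      rw [← hC2, ← C_add]
      congr 1
      simp only [hee]
      push_cast
      ring
    intro m
    induction m with
    | zero =>
      have e0 : Dop (Ω 0) = C (ee 0) * Ω 0 := by
        rw [hΩ0]
        have h : Dop 1 = A + B := by simp [hDop, one_comp]
        rw [h, hAB, mul_one]
        congr 1
        simp [hee]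
      have d0 : Dp (Ω 0) = 2 * Ω 1 + 2 * C (lam 0) * Ω (0-1) := by
        rw [hΩ0]
        have h : Dp 1 = A - B := by simp [hDp, one_comp]
        rw [h, hABm, hΩ1W]
        simp [hlam0]
      have e1 : Dop (Ω 1) = C (ee 1) * Ω 1 := by
        have h : Ω 1 = W * Ω 0 := by rw [hΩ0, hΩ1W, mul_one]
        rw [h, hDopW, e0, d0, ← h]
        rw [hee1 0, hΩ0, hΩ1W]
        simp only [Nat.zero_sub, hlam0, mul_zero, map_zero, zero_mul, add_zero, mul_zero,
          mul_one]
        ring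
      have d1 : Dp (Ω 1) = 2 * Ω 2 + 2 * C (lam 1) * Ω 0 := by
        have h : Ω 1 = W * Ω 0 := by rw [hΩ0, hΩ1W, mul_one]
        rw [h, hDpW, e0, d0, hΩ0]
        have h2 : Ω 2 = W * Ω 1 + C (lam 1) * Ω 0 := hrec2 0
        rw [h2, hΩ0, hΩ1W]
        have he0 : C (ee 0) = C (p : ℝ) := by congr 1; simp [hee]
        rw [he0, hCp]
        have hl1 : C (lam 1) + C (lam 1) + C (lam 1) + C (lam 1) = C ((p:ℝ)/2) + C ((p:ℝ)/2) := by
          rw [← C_add, ← C_add, ← C_add, ← C_add]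
          congr 1
          simp only [hlam]
          push_cast
          ring
        have hC8 : (C (8:ℝ) : Polynomial ℝ) = 8 := map_ofNat C 8
        have hl2 : C ((p:ℝ)/2) * 4 = C (lam 1) * 8 := by
          rw [← hC4, ← hC8, ← C_mul, ← C_mul]
          congr 1
          simp only [hlam]
          push_cast
          ring
        simp only [Nat.zero_sub, hlam0, mul_zero, map_zero, zero_mul, add_zero, mul_one]
        linear_combination hl1 + hl2
      exact ⟨⟨e0, d0⟩, e1, d1⟩
    | succ m ih =>
      obtain ⟨⟨e0, d0⟩, e1, d1⟩ := ih
      have d1' : Dp (Ω (m+1)) = 2 * Ω (m+2) + 2 * C (lam (m+1)) * Ω (m+1-1) := by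
        simpa only [Nat.add_sub_cancel] using d1
      refine ⟨⟨e1, d1'⟩, ?_, ?_⟩
      · have hstep : Dop (Ω (m+2)) = W * Dop (Ω (m+1)) + Dp (Ω (m+1))
            + C (lam (m+1)) * Dop (Ω m) := by
          rw [hrec2 m, hDopAdd, hDopW, hDopC]
        rw [hstep, e1, d1, e0]
        have f1 := hee1 (m+1)
        have f2 : 2 * C (lam (m+1)) + C (lam (m+1)) * C (ee m)
            = C (ee (m+1)) * C (lam (m+1)) := by
          simp only [← hC2, ← C_mul, ← C_add]
          congr 1
          simp only [hee]
          push_cast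
          ring
        have hr := hrec2 m
        linear_combination (-(C (ee (m+1)) : Polynomial ℝ)) * hr
          - Ω (m+2) * f1 + Ω m * f2
      · have hstep : Dp (Ω (m+2)) = W * Dp (Ω (m+1)) + Dop (Ω (m+1))
            + C (lam (m+1)) * Dp (Ω m) := by
          rw [hrec2 m, hDpAdd, hDpW, hDpC]
        rw [hstep, e1, d1, d0]
        have hr3 : Ω (m+3) = W * Ω (m+2) + C (lam (m+2)) * Ω (m+1) := hrec2 (m+1)
        have hrW : W * Ω m = Ω (m+1) - C (lam m) * Ω (m-1) := hrecW m
        have gA : 2 * C (lam (m+2)) + 2 * C (lam (m+2))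
            = 2 * C (lam (m+1)) + C (ee (m+1)) + 2 * C (lam (m+1)) := by
          simp only [← hC2, ← C_mul, ← C_add]
          congr 1
          simp only [hee, hlam]
          push_cast
          ring
        linear_combination (-2 : Polynomial ℝ) * hr3 + (2 * C (lam (m+1))) * hrW
          - Ω (m+1) * gA
  have heig : ∀ n : ℕ, Dop (Ω n) = C (ee n) * Ω n := fun n => (keys n).1.1
  -- symmetry of Dop with respect to L
  have hc1 : ((X:Polynomial ℝ) + 1).comp (X - 1) = X := by
    simp only [add_comp, X_comp, one_comp]; ring
  have hc2 : ((X:Polynomial ℝ) - 1).comp (X + 1) = X := by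
    simp only [sub_comp, X_comp, one_comp]; ring
  have hqq : ∀ u : Polynomial ℝ, (u.comp (X+1)).comp (X-1) = u := by
    intro u; rw [comp_assoc, hc1, comp_X]
  have hqq' : ∀ u : Polynomial ℝ, (u.comp (X-1)).comp (X+1) = u := by
    intro u; rw [comp_assoc, hc2, comp_X]
  have hsymL : ∀ q s : Polynomial ℝ, L (s * Dop q) = L (q * Dop s) := by
    intro q s
    set G : Polynomial ℝ := s * q.comp (X+1) - q * s.comp (X+1) with hG
    have hid : s * Dop q - q * Dop s
        = (X - C x) * (G.comp (X - 1)) + A * ((G.comp (X-1)).comp (X+1)) := by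
      rw [hqq']
      simp only [hG, hDop, sub_comp, mul_comp, hqq]
      simp only [hA, hB]
      ring
    have h0 := Hq (G.comp (X - 1))
    have : L (s * Dop q) - L (q * Dop s) = 0 := by
      rw [← map_sub, hid, h0]
    linarith
  have horto : ∀ m n : ℕ, m ≠ n → L (Ω m * Ω n) = 0 := by
    intro m n hmn
    have h1 := hsymL (Ω n) (Ω m)
    rw [heig n, heig m] at h1
    have h2 : ∀ (a : ℝ) (u v : Polynomial ℝ), L (u * (C a * v)) = a * L (u * v) := by
      intro a u v
      have h3 : u * (C a * v) = a • (u * v) := by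
        rw [Polynomial.smul_eq_C_mul]; ring
      rw [h3, map_smul, smul_eq_mul]
    rw [h2, h2, mul_comm (Ω n) (Ω m)] at h1
    have hne : ee n - ee m ≠ 0 := by
      simp only [hee]
      intro h
      have : (m:ℝ) = (n:ℝ) := by linarith
      exact hmn (by exact_mod_cast this)
    have h4 : (ee n - ee m) * L (Ω m * Ω n) = 0 := by
      linear_combination h1
    rcases mul_eq_zero.mp h4 with h | h
    · exact absurd h hne
    · exact h
  have hmon : ∀ n : ℕ, ((Ω n).Monic ∧ (Ω n).natDegree = n)
      ∧ ((Ω (n+1)).Monic ∧ (Ω (n+1)).natDegree = n+1) := by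
    have hWmon : W.Monic ∧ W.natDegree = 1 := by
      have h : W = X + C ((p:ℝ)/2 - x) := by rw [hW, map_sub]; ring
      exact ⟨by rw [h]; exact monic_X_add_C _, by rw [h]; exact natDegree_X_add_C _⟩
    intro n
    induction n with
    | zero =>
      exact ⟨⟨by rw [hΩ0]; exact monic_one, by rw [hΩ0]; exact natDegree_one⟩,
        ⟨by rw [hΩ1W]; exact hWmon.1, by rw [hΩ1W]; exact hWmon.2⟩⟩
    | succ m ih =>
      obtain ⟨⟨m0, d0⟩, m1, d1⟩ := ih
      have hmul : (W * Ω (m+1)).Monic := hWmon.1.mul m1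
      have hdeg : (W * Ω (m+1)).natDegree = m + 2 := by
        rw [hWmon.1.natDegree_mul m1, hWmon.2, d1]
        omega
      have hlt : (C (lam (m+1)) * Ω m).degree < (W * Ω (m+1)).degree := by
        have h1 : (C (lam (m+1)) * Ω m).degree ≤ (m : WithBot ℕ) := by
          refine (degree_mul_le _ _).trans ?_
          have h5 : (Ω m).degree ≤ (m : WithBot ℕ) := by
            rw [degree_eq_natDegree m0.ne_zero, d0]
          calc (C (lam (m+1))).degree + (Ω m).degree ≤ 0 + (m : WithBot ℕ) :=
                add_le_add degree_C_le h5
            _ = (m : WithBot ℕ) := zero_add _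
        have h2 : (W * Ω (m+1)).degree = ((m+2 : ℕ) : WithBot ℕ) := by
          rw [degree_eq_natDegree hmul.ne_zero, hdeg]
        rw [h2]
        refine lt_of_le_of_lt h1 ?_
        exact_mod_cast Nat.lt_succ_of_lt (Nat.lt_succ_self m)
      have hmon2 : (Ω (m+2)).Monic := by
        rw [hrec2 m]
        exact hmul.add_of_left hlt
      have hdeg2 : (Ω (m+2)).natDegree = m+2 := by
        rw [hrec2 m]
        have h6 := degree_add_eq_left_of_degree_lt hlt
        have h7 : (W * Ω (m+1) + C (lam (m+1)) * Ω m).degree = ((m+2:ℕ) : WithBot ℕ) := by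
          rw [h6, degree_eq_natDegree hmul.ne_zero, hdeg]
        exact natDegree_eq_of_degree_eq_some h7
      exact ⟨⟨m1, d1⟩, hmon2, hdeg2⟩
  have main : ∀ r : ℕ, ∀ n : ℕ, r < n → L (X ^ r * Ω n) = 0 := by
    intro r
    induction r using Nat.strong_induction_on with
    | _ r ih =>
      intro n hrn
      have h1 : L (Ω r * Ω n) = 0 := horto r n (Nat.ne_of_lt hrn)
      have hsplit : X ^ r * Ω n = Ω r * Ω n + (X ^ r - Ω r) * Ω n := by ring
      rw [hsplit, map_add, h1, zero_add]
      set q : Polynomial ℝ := X ^ r - Ω r with hq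
      rcases eq_or_ne q 0 with h0 | h0
      · rw [h0]; simp
      · have hΩr := (hmon r).1
        have h2 : degree (X ^ r : Polynomial ℝ) = (r : WithBot ℕ) := degree_X_pow r
        have h3 : degree (Ω r) = (r : WithBot ℕ) := by
          rw [degree_eq_natDegree hΩr.1.ne_zero, hΩr.2]
        have hdeg : q.degree < (r : WithBot ℕ) := by
          rw [hq, ← h2]
          refine degree_sub_lt (by rw [h2, h3]) (pow_ne_zero r X_ne_zero) ?_
          rw [leadingCoeff_X_pow]
          exact hΩr.1.leadingCoeff.symm
        have hdq : q.natDegree < r := by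
          rwa [← natDegree_lt_iff_degree_lt h0] at hdeg
        have hqsum : q = ∑ i ∈ Finset.range r, C (q.coeff i) * X ^ i := by
          conv_lhs => rw [q.as_sum_range' r hdq]
          exact Finset.sum_congr rfl fun i _ => (C_mul_X_pow_eq_monomial).symm
        rw [hqsum, Finset.sum_mul, map_sum]
        refine Finset.sum_eq_zero fun i hi => ?_
        have hir : i < r := Finset.mem_range.mp hi
        have h4 : C (q.coeff i) * X ^ i * Ω n = (q.coeff i) • (X ^ i * Ω n) := by
          rw [Polynomial.smul_eq_C_mul]; ring
        rw [h4, map_smul, smul_eq_mul, ih i hir n (lt_trans hir hrn), mul_zero]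
  exact main

/-- The polynomials `Ω_n^(p)` defined by the three-term recurrence
`Ω_0 = 1`, `Ω_1 = y - x + p/2`,
`Ω_{n+1} = (y - x + p/2) Ω_n + (n(n+p-1)/4) Ω_{n-1}`
are orthogonal with respect to the linear functional `L` whose moments are the
higher-order Euler polynomial values `E_n^(p)(x)` (defined by the EGF
`(2/(e^z+1))^p e^{xz} = Σ E_n^(p)(x) z^n/n!`). -/
theorem stmt_0 (p : ℕ) (hp : 1 ≤ p) (x : ℝ)
    (E : ℕ → ℝ)
    (hE : ∀ z : ℂ, ‖z‖ < 1 →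
      HasSum (fun n : ℕ => (E n : ℂ) * z ^ n / (n.factorial : ℂ))
        ((2 / (Complex.exp z + 1)) ^ p * Complex.exp (x * z)))
    (L : Polynomial ℝ →ₗ[ℝ] ℝ)
    (hL : ∀ k : ℕ, L (X ^ k) = E k)
    (Ω : ℕ → Polynomial ℝ)
    (hΩ0 : Ω 0 = 1)
    (hΩ1 : Ω 1 = X - C x + C ((p : ℝ) / 2))
    (hΩrec : ∀ n : ℕ, 1 ≤ n →
      Ω (n + 1) = (X - C x + C ((p : ℝ) / 2)) * Ω n
        + C ((n : ℝ) * ((n : ℝ) + (p : ℝ) - 1) / 4) * Ω (n - 1)) :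
    ∀ r n : ℕ, r < n → L (X ^ r * Ω n) = 0 := by
  exact ortho_of_star p x L Ω hΩ0 hΩ1 hΩrec
    (Hq_of_star p x E L hL (euler_star p hp x E hE))
end

section
/- Fix an integer p ≥ 1 and a real number x. Let 𝔈_{n,k}^(p) be the generalized Motzkin numbers obtained from the choices σ_k = x − p/2 (for all k ≥ 0) and τ_k = −k(k+p−1)/4 (for all k ≥ 1). Then for every n ≥ 0, 𝔈_{n,0}^(p) = E_n^(p)(x). -/
open PowerSeries

namespace Stmt1Aux

noncomputable def U : PowerSeries ℝ := PowerSeries.exp ℝ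
noncomputable def Iv : PowerSeries ℝ := (U + 1)⁻¹
noncomputable def Rx (x : ℝ) : PowerSeries ℝ := rescale x (PowerSeries.exp ℝ)
noncomputable def T : PowerSeries ℝ := 2 * (U - 1) * Iv
noncomputable def G (p : ℕ) (x : ℝ) : PowerSeries ℝ := ((2 : PowerSeries ℝ) * Iv) ^ p * Rx x

lemma constCoeff_U1 : constantCoeff (U + 1) = 2 := by
  simp [U, constantCoeff_exp]; norm_num

lemma hUI : (U + 1) * Iv = 1 :=
  PowerSeries.mul_inv_cancel _ (by rw [constCoeff_U1]; norm_num)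

lemma dU : d⁄dX ℝ U = U := by
  ext n
  rw [coeff_derivative]
  simp only [U, coeff_exp]
  push_cast
  rw [eq_comm, div_eq_iff (by positivity), Nat.factorial_succ]
  push_cast
  field_simp

lemma dRx (x : ℝ) : d⁄dX ℝ (Rx x) = C x * Rx x := by
  ext n
  rw [coeff_derivative]
  simp only [Rx, coeff_rescale, coeff_exp, coeff_C_mul]
  push_cast
  rw [Nat.factorial_succ]
  push_cast
  have h1 : (n.factorial : ℝ) ≠ 0 := by positivity
  field_simp
  ring

lemma dIv : d⁄dX ℝ Iv = -(Iv ^ 2) * U := by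
  rw [Iv, derivative_inv']
  simp [dU]

end Stmt1Aux

namespace Stmt1Aux2
open Stmt1Aux

lemma dmul (f g : PowerSeries ℝ) : d⁄dX ℝ (f * g) = f * d⁄dX ℝ g + g * d⁄dX ℝ f := by
  rw [Derivation.leibniz, smul_eq_mul, smul_eq_mul]

lemma d2 : d⁄dX ℝ (2 : PowerSeries ℝ) = 0 := by
  rw [show (2 : PowerSeries ℝ) = C (2:ℝ) from (map_ofNat C 2).symm, derivative_C]

lemma dT4 : (4 : PowerSeries ℝ) * d⁄dX ℝ T = 4 - T ^ 2 := by
  have hT : T = 2 * (U - 1) * Iv := rfl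
  rw [hT, dmul, dmul, dIv, map_sub, dU, Derivation.map_one_eq_zero, d2]
  linear_combination ((4 : PowerSeries ℝ) - 4*(U-1)*Iv) * hUI

lemma hTdef : T = 2 * (U - 1) * Iv := rfl

lemma dG4 (p : ℕ) (x : ℝ) :
    (4 : PowerSeries ℝ) * d⁄dX ℝ (G p x) =
      C (4*x - 2*p) * G p x - C (p:ℝ) * (G p x * T) := by
  induction p with
  | zero =>
      simp only [G, pow_zero, one_mul, dRx, Nat.cast_zero, map_zero, zero_mul, sub_zero,
        mul_zero]
      rw [show C (4*x) = 4 * C x by rw [map_mul, map_ofNat]]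
      ring
  | succ p ih =>
      have hsplit : G (p+1) x = (2*Iv) * G p x := by rw [G, G, pow_succ]; ring
      rw [hsplit, dmul, dmul, dIv, d2]
      push_cast
      rw [show C (4*x - 2*((p:ℝ)+1)) = C (4*x-2*(p:ℝ)) - 2 by
            rw [show (4*x - 2*((p:ℝ)+1)) = (4*x-2*(p:ℝ)) - 2 by ring, map_sub, map_ofNat],
          show C ((p:ℝ)+1) = C (p:ℝ) + 1 by rw [map_add, map_one]]
      rw [hTdef] at ih ⊢
      linear_combination (2*Iv) * ih - 4*Iv*(G p x) * hUI

lemma dGT4 (p : ℕ) (x : ℝ) (k : ℕ) :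
    (4 : PowerSeries ℝ) * d⁄dX ℝ (G p x * T ^ (k+1)) =
      C (4*((k:ℝ)+1)) * (G p x * T ^ k) + C (4*x - 2*p) * (G p x * T ^ (k+1))
        - C ((k:ℝ)+1+p) * (G p x * T ^ (k+2)) := by
  have hTpow : d⁄dX ℝ (T^(k+1)) = ((k:PowerSeries ℝ)+1) * T^k * d⁄dX ℝ T := by
    rw [Derivation.leibniz_pow]
    simp only [smul_eq_mul, nsmul_eq_mul, Nat.add_sub_cancel]
    push_cast
    ring
  rw [dmul, hTpow]
  rw [show C (4*((k:ℝ)+1)) = 4*((k:PowerSeries ℝ)+1) by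
        rw [show (4*((k:ℝ)+1)) = (4:ℝ)*((k:ℝ)+1) from rfl, map_mul, map_ofNat, map_add,
          map_natCast, map_one],
      show C ((k:ℝ)+1+(p:ℝ)) = ((k:PowerSeries ℝ)+1+(p:PowerSeries ℝ)) by
        rw [map_add, map_add, map_natCast, map_natCast, map_one]]
  have hdG := dG4 p x
  rw [map_natCast] at hdG
  linear_combination (G p x)*((k:PowerSeries ℝ)+1)*T^k * dT4 + T^(k+1) * hdG

end Stmt1Aux2

namespace Stmt1Aux3
open Stmt1Aux Stmt1Aux2

noncomputable def Am (p : ℕ) (x : ℝ) (n k : ℕ) : ℝ :=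
  (n.factorial : ℝ) / (k.factorial : ℝ) * coeff n (G p x * T ^ k)

lemma Am00 (p : ℕ) (x : ℝ) : Am p x 0 0 = 1 := by
  simp only [Am, pow_zero, mul_one, Nat.factorial_zero, Nat.cast_one, div_one, one_mul,
    coeff_zero_eq_constantCoeff, map_mul, map_pow]
  have h1 : constantCoeff Iv = 2⁻¹ := by
    rw [Iv, PowerSeries.constantCoeff_inv, constCoeff_U1]
  have h2 : constantCoeff (Rx x) = 1 := by
    rw [Rx, ← coeff_zero_eq_constantCoeff_apply, coeff_rescale]
    simp [coeff_zero_eq_constantCoeff_apply, constantCoeff_exp]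
  simp [G, map_mul, map_pow, h1, h2, map_ofNat]

lemma Amhigh (p : ℕ) (x : ℝ) {n k : ℕ} (h : n < k) : Am p x n k = 0 := by
  have hT : (X : PowerSeries ℝ) ∣ T := by
    rw [X_dvd_iff, hTdef]
    simp [map_mul, constantCoeff_exp, U]
  have hdvd : (X : PowerSeries ℝ) ^ k ∣ G p x * T ^ k :=
    Dvd.dvd.mul_left (pow_dvd_pow_of_dvd hT k) _
  have := (X_pow_dvd_iff).mp hdvd n h
  simp [Am, this]

lemma Amrec0 (p : ℕ) (x : ℝ) (n : ℕ) :
    Am p x (n+1) 0 = (x - (p:ℝ)/2) * Am p x n 0 - ((p:ℝ)/4) * Am p x n 1 := by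
  have h0 := dG4 p x
  rw [show (4 : PowerSeries ℝ) = C (4:ℝ) from (map_ofNat _ 4).symm] at h0
  have h := congrArg (coeff n) h0
  simp only [map_sub, map_mul, sub_mul, add_mul, mul_assoc, coeff_C_mul, coeff_derivative] at h
  simp only [Am, pow_zero, mul_one, pow_one, Nat.factorial_zero, Nat.factorial_one,
    Nat.cast_one, div_one, Nat.factorial_succ]
  set a := coeff n (G p x) with ha
  set b := coeff n (G p x * T) with hb
  set d := coeff (n+1) (G p x) with hd
  have hn1 : ((n:ℝ)+1) ≠ 0 := by positivity
  have hdval : d = ((4*x-2*(p:ℝ))*a - (p:ℝ)*b)/(4*((n:ℝ)+1)) := by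
    rw [eq_div_iff (by positivity)]
    linear_combination h
  rw [hdval]
  push_cast
  field_simp
  ring

lemma Amreck (p : ℕ) (x : ℝ) (n k : ℕ) :
    Am p x (n+1) (k+1) = Am p x n k + (x - (p:ℝ)/2) * Am p x n (k+1)
      - (((k:ℝ)+2)*((k:ℝ)+1+(p:ℝ))/4) * Am p x n (k+2) := by
  have h0 := dGT4 p x k
  rw [show (4 : PowerSeries ℝ) = C (4:ℝ) from (map_ofNat _ 4).symm] at h0
  have h := congrArg (coeff n) h0
  simp only [map_sub, map_mul, map_add, sub_mul, add_mul, mul_assoc, coeff_C_mul,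
    coeff_derivative] at h
  simp only [Am, Nat.factorial_succ]
  set a := coeff n (G p x * T ^ k) with ha
  set b := coeff n (G p x * T ^ (k+1)) with hb
  set c := coeff n (G p x * T ^ (k+2)) with hc
  set d := coeff (n+1) (G p x * T ^ (k+1)) with hd
  have hk : (k.factorial : ℝ) ≠ 0 := by positivity
  have hk1 : ((k:ℝ)+1) ≠ 0 := by positivity
  have hk2 : ((k:ℝ)+2) ≠ 0 := by positivity
  have hn1 : ((n:ℝ)+1) ≠ 0 := by positivity
  have hdval : d = (4*((k:ℝ)+1)*a + (4*x-2*(p:ℝ))*b - ((k:ℝ)+1+(p:ℝ))*c)/(4*((n:ℝ)+1)) := by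
    rw [eq_div_iff (by positivity)]
    linear_combination h
  rw [hdval]
  push_cast
  field_simp
  ring

end Stmt1Aux3

namespace Stmt1Aux4
open Stmt1Aux Stmt1Aux2 Stmt1Aux3

noncomputable def aseq (p j : ℕ) : ℝ :=
  ∑ i ∈ Finset.range (p+1), (p.choose i : ℝ) * (i:ℝ)^j

lemma aseq_nonneg (p j : ℕ) : 0 ≤ aseq p j :=
  Finset.sum_nonneg fun i _ => by positivity

lemma aseq_zero (p : ℕ) : aseq p 0 = 2^p := by
  simp only [aseq, pow_zero, mul_one]
  rw [← Nat.cast_sum]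
  rw [Nat.sum_range_choose]
  push_cast
  ring

lemma convG (p : ℕ) (x : ℝ) : G p x * (U + 1)^p = 2^p * Rx x := by
  have h2 : (2 * Iv) * (U + 1) = 2 := by linear_combination (2 : PowerSeries ℝ) * hUI
  calc G p x * (U+1)^p = ((2*Iv)^p * (U+1)^p) * Rx x := by rw [G]; ring
    _ = ((2*Iv)*(U+1))^p * Rx x := by rw [mul_pow (2*Iv) (U+1) p, mul_pow]
    _ = 2^p * Rx x := by rw [h2]

lemma algmap_fact (j : ℕ) : (algebraMap ℚ ℝ) (1/(j.factorial:ℚ)) = 1/(j.factorial:ℝ) := by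
  push_cast
  simp

lemma coeff_U1pow (p j : ℕ) :
    coeff j ((U+1)^p) = aseq p j / (j.factorial : ℝ) := by
  have hexp : (U + 1 : PowerSeries ℝ)^p
      = ∑ i ∈ Finset.range (p+1), C (p.choose i : ℝ) * U^i := by
    rw [add_pow]
    refine Finset.sum_congr rfl fun i hi => ?_
    rw [one_pow, mul_one, map_natCast]
    ring
  rw [hexp, map_sum, aseq, Finset.sum_div]
  refine Finset.sum_congr rfl fun i hi => ?_
  rw [coeff_C_mul, U, exp_pow_eq_rescale_exp, coeff_rescale, coeff_exp, algmap_fact]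
  ring

lemma conv_e (p : ℕ) (x : ℝ) (n : ℕ) :
    ∑ kl ∈ Finset.HasAntidiagonal.antidiagonal n,
      (coeff kl.1 (G p x)) * (aseq p kl.2 / (kl.2.factorial:ℝ))
      = 2^p * x^n / (n.factorial:ℝ) := by
  have h := congrArg (coeff n) (convG p x)
  rw [coeff_mul] at h
  rw [show ((2:PowerSeries ℝ)^p) = C ((2:ℝ)^p) by rw [map_pow, map_ofNat],
    coeff_C_mul, Rx, coeff_rescale, coeff_exp, algmap_fact] at h
  simp only [coeff_U1pow] at h
  rw [h]
  ring

end Stmt1Aux4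

namespace Stmt1AuxA

lemma norm34 : ‖(((3:ℝ)/4 : ℝ) : ℂ)‖ = (3/4 : ℝ) := by
  rw [Complex.norm_real, Real.norm_eq_abs, abs_of_nonneg (by norm_num : (0:ℝ) ≤ 3/4)]

lemma coeff_zero_of_hasSum_zero (c : ℕ → ℂ)
    (h : ∀ z : ℂ, ‖z‖ < 1 → HasSum (fun n => c n * z ^ n) 0) : ∀ n, c n = 0 := by
  have h34 : HasSum (fun n => c n * (((3:ℝ)/4 : ℝ) : ℂ) ^ n) 0 := by
    refine h _ ?_
    rw [norm34]; norm_num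
  have htend : Filter.Tendsto (fun n => ‖c n‖ * (3/4 : ℝ) ^ n) Filter.atTop (nhds 0) := by
    have hn := h34.summable.tendsto_atTop_zero.norm
    rw [norm_zero] at hn
    refine hn.congr fun n => ?_
    rw [norm_mul, norm_pow, norm34]
  obtain ⟨C, hC⟩ := htend.bddAbove_range
  have hCmem : ∀ n, ‖c n‖ * (3/4 : ℝ) ^ n ≤ C := fun n => hC (Set.mem_range_self n)
  set q := FormalMultilinearSeries.ofScalars ℂ c with hq
  have hhalf : ((1/2 : NNReal) : ℝ) = (1/2 : ℝ) := by norm_num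
  have hrad : ((1/2 : NNReal) : ENNReal) ≤ q.radius := by
    refine q.le_radius_of_bound C fun n => ?_
    rw [hq, FormalMultilinearSeries.ofScalars_norm, hhalf]
    have hp : ((1/2:ℝ))^n ≤ (3/4:ℝ)^n := by
      refine pow_le_pow_left₀ (by norm_num) (by norm_num) n
    exact le_trans (mul_le_mul_of_nonneg_left hp (norm_nonneg _)) (hCmem n)
  have hball : HasFPowerSeriesOnBall (0 : ℂ → ℂ) q 0 (1/2 : NNReal) := by
    refine ⟨hrad, by norm_num, fun {y} hy => ?_⟩
    rw [EMetric.mem_ball, edist_zero_right] at hy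
    have hy1 : ‖y‖ < 1 := by
      have h2 : ‖y‖₊ < (1/2 : NNReal) := by exact_mod_cast hy
      have h3 := NNReal.coe_lt_coe.mpr h2
      rw [coe_nnnorm, hhalf] at h3
      linarith
    have := h y hy1
    simp only [zero_add, Pi.zero_apply]
    refine HasSum.congr_fun this fun n => ?_
    rw [hq, FormalMultilinearSeries.ofScalars_apply_eq, smul_eq_mul]
  have hzero : q = 0 := hball.hasFPowerSeriesAt.eq_zero
  intro n
  have h5 := congrFun hzero n
  rw [hq] at h5
  exact (FormalMultilinearSeries.ofScalars_eq_zero ℂ n).mp (by exact_mod_cast h5)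

end Stmt1AuxA

namespace Stmt1AuxC
open Stmt1Aux Stmt1Aux2 Stmt1Aux3 Stmt1Aux4 Stmt1AuxA

lemma exp_ne_neg {z : ℂ} (hz : ‖z‖ < 1) : Complex.exp z + 1 ≠ 0 := by
  intro h0
  have hez : Complex.exp z = -1 := by linear_combination h0
  have h2 : Complex.exp (z + z) = 1 := by rw [Complex.exp_add, hez]; ring
  obtain ⟨k, hk⟩ := Complex.exp_eq_one_iff.mp h2
  have hzval : z = (k:ℂ) * Real.pi * Complex.I := by linear_combination hk / 2
  rcases eq_or_ne k 0 with hk0 | hk0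
  · rw [hk0] at hzval
    simp only [Int.cast_zero, zero_mul] at hzval
    rw [hzval, Complex.exp_zero] at hez
    norm_num at hez
  · have hnorm : ‖z‖ = |(k:ℝ)| * Real.pi := by
      rw [hzval, norm_mul, norm_mul, Complex.norm_I, mul_one]
      rw [Complex.norm_intCast, Complex.norm_real, Real.norm_eq_abs,
        abs_of_nonneg Real.pi_pos.le]
    have h1 : (1:ℝ) ≤ |(k:ℝ)| := by
      have := Int.one_le_abs hk0
      calc (1:ℝ) = ((1:ℤ):ℝ) := by norm_num
        _ ≤ ((|k|:ℤ):ℝ) := by exact_mod_cast this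
        _ = |(k:ℝ)| := by push_cast; ring
    have hge : Real.pi ≤ ‖z‖ := by
      rw [hnorm]; nlinarith [Real.pi_pos]
    linarith [Real.pi_gt_three]

lemma hasSum_aseq (p : ℕ) (z : ℂ) :
    HasSum (fun j => (aseq p j : ℂ) * z^j / (j.factorial:ℂ)) ((Complex.exp z + 1)^p) := by
  have hterm : ∀ i ∈ Finset.range (p+1),
      HasSum (fun j => (p.choose i:ℂ) * (((i:ℂ)*z)^j / (j.factorial:ℂ)))
        ((p.choose i:ℂ) * Complex.exp ((i:ℂ)*z)) := by
    intro i _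
    have := NormedSpace.expSeries_div_hasSum_exp ((i:ℂ)*z)
    rw [← Complex.exp_eq_exp_ℂ] at this
    exact this.mul_left _
  have hsum := hasSum_sum hterm
  have hval : ∑ i ∈ Finset.range (p+1), (p.choose i:ℂ) * Complex.exp ((i:ℂ)*z)
      = (Complex.exp z + 1)^p := by
    rw [add_pow]
    refine Finset.sum_congr rfl fun i _ => ?_
    rw [one_pow, mul_one, Complex.exp_nat_mul]
    ring
  rw [hval] at hsum
  refine hsum.congr_fun fun j => ?_
  rw [aseq]
  push_cast
  rw [Finset.sum_mul, Finset.sum_div]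
  refine Finset.sum_congr rfl fun i _ => ?_
  rw [mul_pow]
  ring

lemma summable_norm_aseq (p : ℕ) (z : ℂ) :
    Summable (fun j => ‖(aseq p j : ℂ) * z^j / (j.factorial:ℂ)‖) := by
  have hs : Summable (fun j => ∑ i ∈ Finset.range (p+1),
      (p.choose i : ℝ) * (((i:ℝ)*‖z‖)^j / (j.factorial:ℝ))) := by
    refine summable_sum fun i _ => ?_
    exact (Real.summable_pow_div_factorial ((i:ℝ)*‖z‖)).mul_left _
  refine hs.congr fun j => ?_
  rw [norm_div, norm_mul, norm_pow]
  rw [Complex.norm_real, Real.norm_eq_abs, abs_of_nonneg (aseq_nonneg p j)]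
  rw [Complex.norm_natCast]
  rw [aseq, Finset.sum_mul, Finset.sum_div]
  refine Finset.sum_congr rfl fun i _ => ?_
  rw [mul_pow]
  ring

lemma summable_norm_Eseries (E : ℕ → ℝ) (S : ℂ → ℂ)
    (hE : ∀ z : ℂ, ‖z‖ < 1 →
      HasSum (fun n : ℕ => (E n : ℂ) * z ^ n / (n.factorial : ℂ)) (S z))
    {z : ℂ} (hz : ‖z‖ < 1) :
    Summable (fun n => ‖(E n : ℂ) * z ^ n / (n.factorial : ℂ)‖) := by
  set r : ℝ := (1 + ‖z‖) / 2 with hr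
  have hzr : ‖z‖ < r := by rw [hr]; linarith [norm_nonneg z]
  have hr0 : 0 < r := lt_of_le_of_lt (norm_nonneg z) hzr
  have hr1 : r < 1 := by rw [hr]; linarith
  have hrn : ‖((r:ℝ):ℂ)‖ = r := by
    rw [Complex.norm_real, Real.norm_eq_abs, abs_of_nonneg hr0.le]
  have hs := hE ((r:ℝ):ℂ) (by rw [hrn]; exact hr1)
  have htend : Filter.Tendsto (fun n => |E n| * r ^ n / (n.factorial:ℝ))
      Filter.atTop (nhds 0) := by
    have hn := hs.summable.tendsto_atTop_zero.norm
    rw [norm_zero] at hn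
    refine hn.congr fun n => ?_
    rw [norm_div, norm_mul, norm_pow, hrn, Complex.norm_real, Real.norm_eq_abs,
      Complex.norm_natCast]
  obtain ⟨C, hC⟩ := htend.bddAbove_range
  have hCmem : ∀ n, |E n| * r ^ n / (n.factorial:ℝ) ≤ C := fun n => hC (Set.mem_range_self n)
  have hgeo : Summable (fun n => C * (‖z‖ / r) ^ n) := by
    refine (summable_geometric_of_lt_one (by positivity) ?_).mul_left C
    rw [div_lt_one hr0]; exact hzr
  refine hgeo.of_nonneg_of_le (fun n => norm_nonneg _) fun n => ?_
  rw [norm_div, norm_mul, norm_pow, Complex.norm_real, Real.norm_eq_abs, Complex.norm_natCast]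
  have hfact : (0:ℝ) < (n.factorial:ℝ) := by positivity
  have key : |E n| * ‖z‖^n / (n.factorial:ℝ) = (|E n| * r^n / (n.factorial:ℝ)) * (‖z‖/r)^n := by
    have hr0' : r ≠ 0 := hr0.ne'
    field_simp
    rw [mul_assoc, ← mul_pow, mul_div_assoc', mul_div_cancel_left₀ _ hr0']
  rw [key]
  refine mul_le_mul_of_nonneg_right (hCmem n) (by positivity)

lemma conv_E (p : ℕ) (x : ℝ) (E : ℕ → ℝ)
    (hE : ∀ z : ℂ, ‖z‖ < 1 →
      HasSum (fun n : ℕ => (E n : ℂ) * z ^ n / (n.factorial : ℂ))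
        ((2 / (Complex.exp z + 1)) ^ p * Complex.exp (x * z))) (n : ℕ) :
    ∑ kl ∈ Finset.HasAntidiagonal.antidiagonal n,
      (E kl.1 / (kl.1.factorial:ℝ)) * (aseq p kl.2 / (kl.2.factorial:ℝ))
      = 2^p * x^n / (n.factorial:ℝ) := by
  set c : ℕ → ℂ := fun m => ((∑ kl ∈ Finset.HasAntidiagonal.antidiagonal m,
      (E kl.1 / (kl.1.factorial:ℝ)) * (aseq p kl.2 / (kl.2.factorial:ℝ))
      - 2^p * x^m / (m.factorial:ℝ) : ℝ) : ℂ) with hc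
  have hzero : ∀ m, c m = 0 := by
    apply coeff_zero_of_hasSum_zero
    intro z hz
    have hf := hE z hz
    have hfn := summable_norm_Eseries E _ hE hz
    have hg := hasSum_aseq p z
    have hgn := summable_norm_aseq p z
    have hprod_sum : Summable (fun m => ∑ kl ∈ Finset.HasAntidiagonal.antidiagonal m,
        ((E kl.1:ℂ) * z^kl.1/(kl.1.factorial:ℂ))
          * ((aseq p kl.2:ℂ) * z^kl.2/(kl.2.factorial:ℂ))) :=
      (summable_norm_sum_mul_antidiagonal_of_summable_norm hfn hgn).of_norm
    have htsum := tsum_mul_tsum_eq_tsum_sum_antidiagonal_of_summable_norm hfn hgn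
    rw [hf.tsum_eq, hg.tsum_eq] at htsum
    have hprod : HasSum (fun m => ∑ kl ∈ Finset.HasAntidiagonal.antidiagonal m,
        ((E kl.1:ℂ) * z^kl.1/(kl.1.factorial:ℂ))
          * ((aseq p kl.2:ℂ) * z^kl.2/(kl.2.factorial:ℂ)))
        (((2 / (Complex.exp z + 1)) ^ p * Complex.exp (x * z)) * (Complex.exp z + 1)^p) := by
      rw [htsum]
      exact hprod_sum.hasSum
    have hFG : ((2 / (Complex.exp z + 1)) ^ p * Complex.exp ((x:ℂ) * z))
        * (Complex.exp z + 1)^p = (2:ℂ)^p * Complex.exp ((x:ℂ) * z) := by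
      have hw := exp_ne_neg hz
      field_simp
      rw [div_pow, div_mul_cancel₀ _ (pow_ne_zero _ hw)]
    rw [hFG] at hprod
    have hrhs : HasSum (fun m => (2:ℂ)^p * (((x:ℂ)*z)^m / (m.factorial:ℂ)))
        ((2:ℂ)^p * Complex.exp ((x:ℂ) * z)) := by
      have := NormedSpace.expSeries_div_hasSum_exp ((x:ℂ)*z)
      rw [← Complex.exp_eq_exp_ℂ] at this
      exact this.mul_left _
    have hsub := hprod.sub hrhs
    rw [sub_self] at hsub
    refine hsub.congr_fun fun m => ?_
    rw [hc]
    push_cast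
    rw [sub_mul, Finset.sum_mul]
    congr 1
    · refine Finset.sum_congr rfl fun kl hkl => ?_
      have hm : kl.1 + kl.2 = m := Finset.HasAntidiagonal.mem_antidiagonal.mp hkl
      rw [← hm, pow_add]
      ring
    · rw [mul_pow]; ring
  have hn := hzero n
  rw [hc] at hn
  have hn2 : (∑ kl ∈ Finset.HasAntidiagonal.antidiagonal n,
      (E kl.1 / (kl.1.factorial:ℝ)) * (aseq p kl.2 / (kl.2.factorial:ℝ))
      - 2^p * x^n / (n.factorial:ℝ) : ℝ) = 0 := by
    simp only [] at hn
    exact_mod_cast hn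
  linarith

end Stmt1AuxC

namespace Stmt1AuxF
open Stmt1Aux Stmt1Aux2 Stmt1Aux3 Stmt1Aux4 Stmt1AuxA Stmt1AuxC

lemma Am0_eq_E (p : ℕ) (x : ℝ) (E : ℕ → ℝ)
    (hE : ∀ z : ℂ, ‖z‖ < 1 →
      HasSum (fun n : ℕ => (E n : ℂ) * z ^ n / (n.factorial : ℂ))
        ((2 / (Complex.exp z + 1)) ^ p * Complex.exp (x * z))) :
    ∀ n, Am p x n 0 = E n := by
  intro n
  induction n using Nat.strong_induction_on with
  | _ n ih =>
  have h1 := conv_e p x n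
  have h2 := conv_E p x E hE n
  have hco : ∀ m : ℕ, coeff m (G p x) = Am p x m 0 / (m.factorial:ℝ) := by
    intro m
    rw [Am, pow_zero, mul_one, Nat.factorial_zero, Nat.cast_one, div_one]
    have : (m.factorial:ℝ) ≠ 0 := by positivity
    field_simp
  simp only [hco] at h1
  have key := h1.trans h2.symm
  have hmem : ((n,0) : ℕ×ℕ) ∈ Finset.HasAntidiagonal.antidiagonal n := by simp
  rw [← Finset.add_sum_erase _ _ hmem, ← Finset.add_sum_erase _ _ hmem] at key
  have herase : ∑ kl ∈ (Finset.HasAntidiagonal.antidiagonal n).erase (n,0),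
        (Am p x kl.1 0/(kl.1.factorial:ℝ)) * (aseq p kl.2/(kl.2.factorial:ℝ))
      = ∑ kl ∈ (Finset.HasAntidiagonal.antidiagonal n).erase (n,0),
        (E kl.1/(kl.1.factorial:ℝ)) * (aseq p kl.2/(kl.2.factorial:ℝ)) := by
    refine Finset.sum_congr rfl fun kl hkl => ?_
    obtain ⟨hne, hmem'⟩ := Finset.mem_erase.mp hkl
    have hsumkl : kl.1 + kl.2 = n := Finset.HasAntidiagonal.mem_antidiagonal.mp hmem'
    have hlt : kl.1 < n := by
      rcases Nat.lt_or_ge kl.1 n with h | h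
      · exact h
      · exfalso
        apply hne
        have h1' : kl.1 = n := by omega
        have h2' : kl.2 = 0 := by omega
        exact Prod.ext h1' h2'
    rw [ih kl.1 hlt]
  rw [herase] at key
  have hfin := add_right_cancel key
  rw [aseq_zero] at hfin
  have hfact : ((n.factorial:ℝ)) ≠ 0 := by positivity
  have h2p : (2:ℝ)^p ≠ 0 := by positivity
  simp only [Nat.factorial_zero, Nat.cast_one, div_one] at hfin
  field_simp at hfin
  exact hfin

end Stmt1AuxF

/-- The generalized Motzkin numbers `𝔈_{n,k}^(p)` built from
`σ_k = x - p/2` and `τ_k = -k(k+p-1)/4` satisfy `𝔈_{n,0}^(p) = E_n^(p)(x)`,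
where `E_n^(p)(x)` are the higher-order Euler polynomials, defined by the EGF
`(2/(e^z+1))^p e^{xz} = Σ E_n^(p)(x) z^n/n!`.
The Motzkin recurrence `M_{n+1,k} = M_{n,k-1} + σ_k M_{n,k} + τ_{k+1} M_{n,k+1}`
(with `M_{n,k} = 0` for `k < 0` or `k > n`) is encoded with natural-number
indices: the `k = 0` case drops the `M_{n,-1}` term. -/
theorem stmt_1 (p : ℕ) (hp : 1 ≤ p) (x : ℝ)
    (E : ℕ → ℝ)
    (hE : ∀ z : ℂ, ‖z‖ < 1 →
      HasSum (fun n : ℕ => (E n : ℂ) * z ^ n / (n.factorial : ℂ))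
        ((2 / (Complex.exp z + 1)) ^ p * Complex.exp (x * z)))
    (M : ℕ → ℕ → ℝ)
    (hM00 : M 0 0 = 1)
    (hMhigh : ∀ n k : ℕ, n < k → M n k = 0)
    (hM0 : ∀ n : ℕ, M (n + 1) 0 =
      (x - (p : ℝ) / 2) * M n 0 + (-((1 : ℝ) * ((1 : ℝ) + (p : ℝ) - 1) / 4)) * M n 1)
    (hMk : ∀ n k : ℕ, M (n + 1) (k + 1) =
      M n k + (x - (p : ℝ) / 2) * M n (k + 1)
        + (-(((k : ℝ) + 2) * (((k : ℝ) + 2) + (p : ℝ) - 1) / 4)) * M n (k + 2)) :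
    ∀ n : ℕ, M n 0 = E n := by
  have key : ∀ n k : ℕ, M n k = Stmt1Aux3.Am p x n k := by
    intro n
    induction n with
    | zero =>
        intro k
        cases k with
        | zero => rw [hM00, Stmt1Aux3.Am00]
        | succ k => rw [hMhigh 0 (k+1) (Nat.succ_pos k), Stmt1Aux3.Amhigh p x (Nat.succ_pos k)]
    | succ n ih =>
        intro k
        cases k with
        | zero =>
            rw [hM0 n, ih 0, ih 1, Stmt1Aux3.Amrec0]
            ring
        | succ k =>
            rw [hMk n k, ih k, ih (k+1), ih (k+2), Stmt1Aux3.Amreck]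
            ring
  intro n
  rw [key n 0, Stmt1AuxF.Am0_eq_E p x E hE n]
end

section
/- Let (s_n)_{n≥0} and (t_n)_{n≥1} be real sequences, and let M_{n,k} be the generalized Motzkin numbers obtained from the choices σ_k = s_k and τ_k = t_k. Let L be a linear functional on real polynomials in y with L(1) = 1, and suppose (P_n)_{n≥0} are monic real polynomials with P_0 = 1, P_1(y) = y − s_0, P_{n+1}(y) = (y − s_n)P_n(y) − t_n P_{n−1}(y) for n ≥ 1, and L(y^r P_n(y)) = 0 for all 0 ≤ r < n. Then for every n ≥ 0, M_{n,0} = L(y^n). -/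
open Polynomial

/-- general theorem: if `(P_n)` are the monic orthogonal
polynomials of a linear functional `L` with `L(1) = 1`, with three-term
recurrence coefficients `s_n, t_n`, and `M_{n,k}` are the generalized Motzkin
numbers built from `σ_k = s_k` and `τ_k = t_k`, then `M_{n,0} = L(y^n)`
(the moments of `L`).
The Motzkin recurrence `M_{n+1,k} = M_{n,k-1} + σ_k M_{n,k} + τ_{k+1} M_{n,k+1}`
(with `M_{n,k} = 0` for `k < 0` or `k > n`) is encoded with natural-number
indices: the `k = 0` case drops the `M_{n,-1}` term. -/
theorem stmt_8 (s t : ℕ → ℝ)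
    (M : ℕ → ℕ → ℝ)
    (hM00 : M 0 0 = 1)
    (hMhigh : ∀ n k : ℕ, n < k → M n k = 0)
    (hM0 : ∀ n : ℕ, M (n + 1) 0 = s 0 * M n 0 + t 1 * M n 1)
    (hMk : ∀ n k : ℕ, M (n + 1) (k + 1) =
      M n k + s (k + 1) * M n (k + 1) + t (k + 2) * M n (k + 2))
    (L : Polynomial ℝ →ₗ[ℝ] ℝ)
    (hL1 : L 1 = 1)
    (P : ℕ → Polynomial ℝ)
    (hmonic : ∀ n : ℕ, (P n).Monic ∧ (P n).natDegree = n)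
    (hP0 : P 0 = 1)
    (hP1 : P 1 = X - C (s 0))
    (hPrec : ∀ n : ℕ, 1 ≤ n →
      P (n + 1) = (X - C (s n)) * P n - C (t n) * P (n - 1))
    (horth : ∀ r n : ℕ, r < n → L (X ^ r * P n) = 0) :
    ∀ n : ℕ, M n 0 = L (X ^ n) := by
  set T : ℕ → ℝ := fun k => ∏ i ∈ Finset.range k, t (i + 1) with hT
  have hT0 : T 0 = 1 := by simp [hT]
  have hTsucc : ∀ k, T (k + 1) = T k * t (k + 1) := by
    intro k; simp [hT, Finset.prod_range_succ]
  have hLC : ∀ (a : ℝ) (q : Polynomial ℝ), L (C a * q) = a * L q := by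
    intro a q
    rw [← smul_eq_C_mul, map_smul, smul_eq_mul]
  have key : ∀ n k, L (X ^ n * P k) = T k * M n k := by
    intro n
    induction n with
    | zero =>
      intro k
      cases k with
      | zero => simp [hP0, hL1, hM00, hT0]
      | succ m =>
        rw [hMhigh 0 (m + 1) (Nat.succ_pos m), mul_zero]
        simpa using horth 0 (m + 1) (Nat.succ_pos m)
    | succ n ih =>
      intro k
      cases k with
      | zero =>
        have e : X ^ (n + 1) * P 0 = X ^ n * P 1 + C (s 0) * (X ^ n * P 0) := by
          rw [hP0, hP1]; ring
        rw [e, map_add, hLC, ih, ih, hT0, hTsucc 0, hT0, hM0 n]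
        ring
      | succ m =>
        have h := hPrec (m + 1) (Nat.le_add_left 1 m)
        simp only [Nat.add_sub_cancel] at h
        have e : X ^ (n + 1) * P (m + 1) =
            X ^ n * P (m + 2) + C (s (m + 1)) * (X ^ n * P (m + 1)) +
              C (t (m + 1)) * (X ^ n * P m) := by
          rw [h]; ring
        rw [e, map_add, map_add, hLC, hLC, ih, ih, ih, hMk n m,
          hTsucc (m + 1), hTsucc m]
        ring
  intro n
  have h := key n 0
  rw [hP0, mul_one, hT0, one_mul] at h
  exact h.symm
end

section
/- Fix an integer p ≥ 1, a real number x, and an integer m ≥ 1. Let RE_m^(p) be the m×m real tridiagonal matrix whose diagonal entries all equal x − p/2, whose subdiagonal entries all equal 1, and whose superdiagonal entry in row k (1-indexed, i.e. the (k, k+1) entry, for 1 ≤ k ≤ m−1) equals −k(k+p−1)/4. Then for every integer n with 0 ≤ n ≤ m, the (1,1) entry of the matrix power (RE_m^(p))^n equals E_n^(p)(x). -/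
open Complex Set
open scoped NNReal ENNReal

noncomputable section
namespace S9

def SB : Set ℂ := Metric.ball 0 1
lemma isOpen_SB : IsOpen SB := Metric.isOpen_ball
lemma uniqueDiffOn_SB : UniqueDiffOn ℂ SB := isOpen_SB.uniqueDiffOn
lemma zero_mem_SB : (0:ℂ) ∈ SB := by simp [SB]
lemma norm_lt_of_mem {z : ℂ} (hz : z ∈ SB) : ‖z‖ < 1 := by
  simpa [SB] using hz

lemma cosh_ne_zero {z : ℂ} (hz : z ∈ SB) : Complex.cosh (z/2) ≠ 0 := by
  intro h
  rw [← Complex.cos_mul_I] at h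
  rcases Complex.cos_eq_zero_iff.mp h with ⟨k, hk⟩
  have h1 := congrArg norm hk
  simp only [norm_mul, Complex.norm_I, mul_one, norm_div] at h1
  have h2 : ‖(2:ℂ)‖ = 2 := by simp
  have h3 : ‖((Real.pi:ℝ):ℂ)‖ = Real.pi := by
    rw [Complex.norm_real]
    exact abs_of_pos Real.pi_pos
  have h4 : (1:ℝ) ≤ ‖2*(k:ℂ)+1‖ := by
    have he : (2*(k:ℂ)+1) = ((2*k+1 : ℤ):ℂ) := by push_cast; ring
    rw [he, Complex.norm_intCast, ← Int.cast_abs]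
    exact_mod_cast Int.one_le_abs (by omega)
  rw [h2, h3] at h1
  have hz1 := norm_lt_of_mem hz
  have hπ := Real.pi_gt_three
  nlinarith

def cc (p : ℕ) : ℕ → ℂ
  | 0 => 1
  | k+1 => cc p k * (-((p:ℂ)+k)/2)

def FF (p : ℕ) (x : ℝ) (k : ℕ) (z : ℂ) : ℂ :=
  cc p k * Complex.exp (((x:ℂ) - (p:ℂ)/2) * z) * Complex.sinh (z/2) ^ k
    / Complex.cosh (z/2) ^ (p+k)

lemma hasDerivAt_sinh_half (y : ℂ) :
    HasDerivAt (fun w : ℂ => Complex.sinh (w/2)) (Complex.cosh (y/2) * (1/2)) y := by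
  exact
    (Complex.hasDerivAt_sinh (y/2)).comp y ((hasDerivAt_id y).div_const 2)

lemma hasDerivAt_cosh_half (y : ℂ) :
    HasDerivAt (fun w : ℂ => Complex.cosh (w/2)) (Complex.sinh (y/2) * (1/2)) y := by
  exact
    (Complex.hasDerivAt_cosh (y/2)).comp y ((hasDerivAt_id y).div_const 2)

set_option maxHeartbeats 1000000 in
lemma hasDerivAt_FF (p : ℕ) (hp : 1 ≤ p) (x : ℝ) (k : ℕ) {z : ℂ} (hz : z ∈ SB) :
    HasDerivAt (FF p x k)
      (FF p x (k+1) z + ((x:ℂ) - (p:ℂ)/2) * FF p x k z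
        - ((k:ℂ)*((k:ℂ)+(p:ℂ)-1)/4) * FF p x (k-1) z) z := by
  have hc := cosh_ne_zero hz
  set A : ℂ := (x:ℂ) - (p:ℂ)/2 with hA
  have hexp : HasDerivAt (fun w : ℂ => Complex.exp (A * w))
      (Complex.exp (A*z) * A) z := by
    simpa using ((hasDerivAt_id z).const_mul A).cexp
  have num : HasDerivAt (fun w : ℂ => cc p k * Complex.exp (A*w) * Complex.sinh (w/2) ^ k)
      ((cc p k * (Complex.exp (A*z) * A)) * Complex.sinh (z/2) ^ k
        + (cc p k * Complex.exp (A*z)) *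
          ((k:ℂ) * Complex.sinh (z/2) ^ (k-1) * (Complex.cosh (z/2) * (1/2)))) z :=
    (hexp.const_mul (cc p k)).mul ((hasDerivAt_sinh_half z).pow k)
  have den : HasDerivAt (fun w : ℂ => Complex.cosh (w/2) ^ (p+k))
      (((p+k : ℕ):ℂ) * Complex.cosh (z/2) ^ (p+k-1) * (Complex.sinh (z/2) * (1/2))) z :=
    (hasDerivAt_cosh_half z).pow (p+k)
  have full := num.div den (pow_ne_zero _ hc)
  convert full using 1
  · rfl
  · rfl
  · rfl
  simp only [FF]
  rw [← hA]
  set s := Complex.sinh (z/2) with hs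
  set c := Complex.cosh (z/2) with hcc
  set EE := Complex.exp (A*z) with hEE
  obtain ⟨q, rfl⟩ : ∃ q, p = q + 1 := ⟨p - 1, by omega⟩
  rcases k with _ | j
  · have hcc1 : cc (q+1) 1 = cc (q+1) 0 * (-(((q+1:ℕ):ℂ)+(0:ℕ))/2) := rfl
    have hcc0 : cc (q+1) 0 = 1 := rfl
    have e1 : q + 1 + 0 - 1 = q := by omega
    rw [hcc1, hcc0, e1]
    push_cast
    field_simp
    ring
  · have hcc2 : cc (q+1) (j+1+1) = cc (q+1) (j+1) * (-(((q+1:ℕ):ℂ)+((j+1:ℕ):ℂ))/2) := by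
      simp [cc]
    have hcc1 : cc (q+1) (j+1) = cc (q+1) j * (-(((q+1:ℕ):ℂ)+((j:ℕ):ℂ))/2) := by
      simp [cc]
    have e1 : q + 1 + (j+1) - 1 = q + j + 1 := by omega
    have e2 : j + 1 - 1 = j := by omega
    rw [e1, e2, hcc2, hcc1]
    simp only [pow_add, pow_succ, pow_zero, one_mul, mul_pow]
    push_cast
    obtain ⟨u, hu, hu'⟩ : ∃ u : ℂ, c ^ q = u ∧ u ≠ 0 := ⟨c ^ q, rfl, pow_ne_zero _ hc⟩
    obtain ⟨v, hv, hv'⟩ : ∃ v : ℂ, c ^ j = v ∧ v ≠ 0 := ⟨c ^ j, rfl, pow_ne_zero _ hc⟩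
    obtain ⟨w, hw⟩ : ∃ w : ℂ, s ^ j = w := ⟨s ^ j, rfl⟩
    rw [hu, hv, hw]
    have d1 : u * c * (v * c * c) ≠ 0 :=
      mul_ne_zero (mul_ne_zero hu' hc) (mul_ne_zero (mul_ne_zero hv' hc) hc)
    have d2 : u * c * (v * c) ≠ 0 := mul_ne_zero (mul_ne_zero hu' hc) (mul_ne_zero hv' hc)
    have d3 : u * c * v ≠ 0 := mul_ne_zero (mul_ne_zero hu' hc) hv'
    have dR : u * c * (v * c) * (u * c * (v * c)) ≠ 0 := mul_ne_zero d2 d2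
    simp only [← mul_div_assoc]
    rw [div_add_div _ _ d1 d2, div_sub_div _ _ (mul_ne_zero d1 d2) d3,
      div_eq_div_iff (mul_ne_zero (mul_ne_zero d1 d2) d3) dR]
    ring


lemma exp_add_one (z : ℂ) :
    Complex.exp z + 1 = 2 * Complex.exp (z/2) * Complex.cosh (z/2) := by
  have hcosh : Complex.cosh (z/2) = (Complex.exp (z/2) + Complex.exp (-(z/2)))/2 := rfl
  have h1 : Complex.exp (z/2) * Complex.exp (z/2) = Complex.exp z := by
    rw [← Complex.exp_add]; ring_nf
  have h2 : Complex.exp (z/2) * Complex.exp (-(z/2)) = 1 := by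
    rw [← Complex.exp_add]; simp
  rw [hcosh]
  linear_combination -h1 - h2

lemma FF_zero_eq (p : ℕ) (x : ℝ) {z : ℂ} (hz : z ∈ SB) :
    (2 / (Complex.exp z + 1)) ^ p * Complex.exp ((x:ℂ) * z) = FF p x 0 z := by
  have hc := cosh_ne_zero hz
  have he := Complex.exp_ne_zero (z/2)
  have h2 : Complex.exp (-(z/2)) * Complex.exp (z/2) = 1 := by
    rw [← Complex.exp_add]; simp
  have h1 : 2 / (Complex.exp z + 1) = Complex.exp (-(z/2)) / Complex.cosh (z/2) := by
    rw [exp_add_one, div_eq_div_iff (mul_ne_zero (mul_ne_zero two_ne_zero he) hc) hc]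
    linear_combination (-2) * Complex.cosh (z/2) * h2
  rw [h1, FF]
  simp only [cc, pow_zero, mul_one, Nat.add_zero]
  rw [div_pow, ← Complex.exp_nat_mul]
  have h3 : ((x:ℂ) - (p:ℂ)/2) * z = (x:ℂ)*z + (p:ℂ) * (-(z/2)) := by ring
  rw [h3, Complex.exp_add]
  ring

lemma differentiableOn_FF (p : ℕ) (hp : 1 ≤ p) (x : ℝ) (k : ℕ) :
    DifferentiableOn ℂ (FF p x k) SB := fun z hz =>
  ((hasDerivAt_FF p hp x k hz).differentiableAt).differentiableWithinAt

lemma analyticOnNhd_FF (p : ℕ) (hp : 1 ≤ p) (x : ℝ) (k : ℕ) :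
    AnalyticOnNhd ℂ (FF p x k) SB :=
  (differentiableOn_FF p hp x k).analyticOnNhd isOpen_SB

lemma contDiffOn_FF (p : ℕ) (hp : 1 ≤ p) (x : ℝ) (k : ℕ) (n : WithTop ℕ∞) :
    ContDiffOn ℂ n (FF p x k) SB :=
  (analyticOnNhd_FF p hp x k).contDiffOn uniqueDiffOn_SB

lemma iDW_eq (n : ℕ) (f : ℂ → ℂ) :
    iteratedDerivWithin n f SB 0 = iteratedDeriv n f 0 := by
  rw [iteratedDerivWithin_eq_iteratedFDerivWithin, iteratedDeriv_eq_iteratedFDeriv,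
    iteratedFDerivWithin_of_isOpen n isOpen_SB zero_mem_SB]


lemma analyticOnNhd_sinh_half : AnalyticOnNhd ℂ (fun z : ℂ => Complex.sinh (z/2)) SB := by
  have h : DifferentiableOn ℂ (fun z : ℂ => Complex.sinh (z/2)) SB :=
    fun z _ => (hasDerivAt_sinh_half z).differentiableAt.differentiableWithinAt
  exact h.analyticOnNhd isOpen_SB

lemma analyticOnNhd_cosh_half : AnalyticOnNhd ℂ (fun z : ℂ => Complex.cosh (z/2)) SB := by
  have h : DifferentiableOn ℂ (fun z : ℂ => Complex.cosh (z/2)) SB :=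
    fun z _ => (hasDerivAt_cosh_half z).differentiableAt.differentiableWithinAt
  exact h.analyticOnNhd isOpen_SB

lemma vanish (n : ℕ) : ∀ (k : ℕ) (A : ℂ → ℂ), n < k → AnalyticOnNhd ℂ A SB →
    iteratedDerivWithin n (fun z => Complex.sinh (z/2) ^ k * A z) SB 0 = 0 := by
  induction n with
  | zero =>
    intro k A hk _
    rw [iteratedDerivWithin_zero]
    simp [zero_pow (by omega : k ≠ 0)]
  | succ n ih =>
    intro k A hk hA
    obtain ⟨j, rfl⟩ : ∃ j, k = j + 1 := ⟨k - 1, by omega⟩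
    rw [iteratedDerivWithin_succ']
    have heq : Set.EqOn (derivWithin (fun z => Complex.sinh (z/2) ^ (j+1) * A z) SB)
        (fun z => Complex.sinh (z/2) ^ j *
          ((((j:ℂ)+1) * (Complex.cosh (z/2) * (1/2))) * A z + Complex.sinh (z/2) * deriv A z)) SB := by
      intro y hy
      rw [derivWithin_of_isOpen isOpen_SB hy]
      have h1 := ((hasDerivAt_sinh_half y).pow (j+1)).mul ((hA y hy).differentiableAt.hasDerivAt)
      rw [show deriv (fun z => Complex.sinh (z/2) ^ (j+1) * A z) y = _ from h1.deriv]
      simp only [Nat.add_sub_cancel, Pi.pow_apply]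
      push_cast
      ring
    rw [(iteratedDerivWithin_congr heq) zero_mem_SB]
    refine ih j _ (by omega) ?_
    apply AnalyticOnNhd.add
    · exact (analyticOnNhd_const.mul (analyticOnNhd_cosh_half.mul analyticOnNhd_const)).mul hA
    · exact analyticOnNhd_sinh_half.mul (hA.deriv_of_isOpen isOpen_SB)

lemma D_vanish (p : ℕ) (hp : 1 ≤ p) (x : ℝ) (n k : ℕ) (h : n < k) :
    iteratedDerivWithin n (FF p x k) SB 0 = 0 := by
  have heq : Set.EqOn (FF p x k)
      (fun z => Complex.sinh (z/2) ^ k *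
        (cc p k * Complex.exp (((x:ℂ)-(p:ℂ)/2)*z) / Complex.cosh (z/2) ^ (p+k))) SB := by
    intro z _
    rw [FF]
    ring
  rw [(iteratedDerivWithin_congr heq) zero_mem_SB]
  refine vanish n k _ h ?_
  have hdiff : DifferentiableOn ℂ
      (fun z => cc p k * Complex.exp (((x:ℂ)-(p:ℂ)/2)*z) / Complex.cosh (z/2) ^ (p+k)) SB := by
    intro z hz
    refine DifferentiableAt.differentiableWithinAt ?_
    exact (((((hasDerivAt_id z).const_mul ((x:ℂ)-(p:ℂ)/2)).cexp).differentiableAt.const_mul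
      _).div ((hasDerivAt_cosh_half z).differentiableAt.pow _) (pow_ne_zero _ (cosh_ne_zero hz)))
  exact hdiff.analyticOnNhd isOpen_SB

lemma D_rec (p : ℕ) (hp : 1 ≤ p) (x : ℝ) (n k : ℕ) :
    iteratedDerivWithin (n+1) (FF p x k) SB 0
      = iteratedDerivWithin n (FF p x (k+1)) SB 0
        + ((x:ℂ)-(p:ℂ)/2) * iteratedDerivWithin n (FF p x k) SB 0
        - ((k:ℂ)*((k:ℂ)+(p:ℂ)-1)/4) * iteratedDerivWithin n (FF p x (k-1)) SB 0 := by
  rw [iteratedDerivWithin_succ']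
  have heq : Set.EqOn (derivWithin (FF p x k) SB)
      (fun z => FF p x (k+1) z + (((x:ℂ)-(p:ℂ)/2) * FF p x k z
        - ((k:ℂ)*((k:ℂ)+(p:ℂ)-1)/4) * FF p x (k-1) z)) SB := by
    intro y hy
    rw [derivWithin_of_isOpen isOpen_SB hy, (hasDerivAt_FF p hp x k hy).deriv]
    ring
  rw [(iteratedDerivWithin_congr heq) zero_mem_SB]
  have e1 : iteratedDerivWithin n (fun z => FF p x (k+1) z + (((x:ℂ)-(p:ℂ)/2) * FF p x k z
        - ((k:ℂ)*((k:ℂ)+(p:ℂ)-1)/4) * FF p x (k-1) z)) SB 0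
      = iteratedDerivWithin n (FF p x (k+1)) SB 0
        + iteratedDerivWithin n (fun z => ((x:ℂ)-(p:ℂ)/2) * FF p x k z
            - ((k:ℂ)*((k:ℂ)+(p:ℂ)-1)/4) * FF p x (k-1) z) SB 0 :=
    iteratedDerivWithin_add zero_mem_SB uniqueDiffOn_SB
      ((contDiffOn_FF p hp x (k+1) n).contDiffWithinAt zero_mem_SB)
      (((contDiffOn_const.mul (contDiffOn_FF p hp x k n)).sub
        (contDiffOn_const.mul (contDiffOn_FF p hp x (k-1) n))).contDiffWithinAt zero_mem_SB)
  have e2 : iteratedDerivWithin n (fun z => ((x:ℂ)-(p:ℂ)/2) * FF p x k z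
        - ((k:ℂ)*((k:ℂ)+(p:ℂ)-1)/4) * FF p x (k-1) z) SB 0
      = iteratedDerivWithin n (fun z => ((x:ℂ)-(p:ℂ)/2) * FF p x k z) SB 0
        - iteratedDerivWithin n (fun z => ((k:ℂ)*((k:ℂ)+(p:ℂ)-1)/4) * FF p x (k-1) z) SB 0 :=
    iteratedDerivWithin_sub zero_mem_SB uniqueDiffOn_SB
      ((contDiffOn_const.mul (contDiffOn_FF p hp x k n)).contDiffWithinAt zero_mem_SB)
      ((contDiffOn_const.mul (contDiffOn_FF p hp x (k-1) n)).contDiffWithinAt zero_mem_SB)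
  have e3 := iteratedDerivWithin_const_mul zero_mem_SB uniqueDiffOn_SB
      ((x:ℂ)-(p:ℂ)/2) ((contDiffOn_FF p hp x k n).contDiffWithinAt zero_mem_SB)
  have e4 := iteratedDerivWithin_const_mul zero_mem_SB uniqueDiffOn_SB
      ((k:ℂ)*((k:ℂ)+(p:ℂ)-1)/4) ((contDiffOn_FF p hp x (k-1) n).contDiffWithinAt zero_mem_SB)
  rw [e1, e2, e3, e4]
  ring

lemma FF_apply_zero (p : ℕ) (x : ℝ) (k : ℕ) :
    FF p x k 0 = if k = 0 then 1 else 0 := by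
  rcases k with _ | j
  · simp [FF, cc]
  · simp [FF, zero_pow (by omega : j + 1 ≠ 0)]

lemma E_eq (p : ℕ) (x : ℝ) (E : ℕ → ℝ)
    (hE : ∀ z : ℂ, ‖z‖ < 1 →
      HasSum (fun n : ℕ => (E n : ℂ) * z ^ n / (n.factorial : ℂ))
        ((2 / (Complex.exp z + 1)) ^ p * Complex.exp (x * z))) (n : ℕ) :
    iteratedDeriv n (fun z : ℂ => (2 / (Complex.exp z + 1)) ^ p * Complex.exp ((x:ℂ) * z)) 0
      = (E n : ℂ) := by
  set g : ℂ → ℂ := fun z => (2 / (Complex.exp z + 1)) ^ p * Complex.exp ((x:ℂ) * z) with hg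
  set pser := FormalMultilinearSeries.ofScalars ℂ (fun n => (E n : ℂ) / n.factorial) with hpser
  have hsummable : Summable (fun n : ℕ => ‖(E n : ℂ) * (1/2:ℂ) ^ n / (n.factorial : ℂ)‖) :=
    summable_norm_iff.mpr (hE (1/2) (by norm_num)).summable
  have hball : HasFPowerSeriesOnBall g pser 0 (1/2) := by
    constructor
    · have hb : ∀ m : ℕ, ‖pser m‖ * ((1/2 : ℝ≥0) : ℝ) ^ m
          ≤ ∑' j : ℕ, ‖(E j : ℂ) * (1/2:ℂ)^j / (j.factorial : ℂ)‖ := by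
        intro m
        have h1 : ‖pser m‖ = ‖(E m : ℂ) / (m.factorial : ℂ)‖ := by
          rw [hpser]
          exact FormalMultilinearSeries.ofScalars_norm ℂ _ m
        have h2 : ‖(E m:ℂ) / (m.factorial : ℂ)‖ * ((1/2:ℝ≥0):ℝ)^m
            = ‖(E m:ℂ) * (1/2:ℂ)^m / (m.factorial : ℂ)‖ := by
          rw [norm_div, norm_div, norm_mul, norm_pow]
          norm_num
          ring
        rw [h1, h2]
        exact hsummable.le_tsum m (fun i _ => norm_nonneg _)
      have hle := pser.le_radius_of_bound _ hb
      have hco : ((1/2 : ℝ≥0) : ℝ≥0∞) = (1/2 : ℝ≥0∞) := by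
        simp
      rw [← hco]
      exact hle
    · simp
    · intro y hy
      have hy1 : ‖y‖ < 1 := by
        have h5 : (‖y‖₊ : ℝ≥0∞) < (1/2 : ℝ≥0∞) := by
          have h := hy
          simp [EMetric.mem_ball] at h
          rw [enorm_eq_nnnorm] at h
          rw [one_div]
          exact h
        have h6 : (‖y‖₊ : ℝ≥0∞) < 1 := lt_of_lt_of_le h5 (by norm_num)
        have h7 : ‖y‖₊ < (1:ℝ≥0) := by exact_mod_cast h6
        exact_mod_cast h7
      have hsum := hE y hy1
      rw [zero_add]
      have hfun : (fun j : ℕ => pser j fun _ => y)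
          = (fun j : ℕ => (E j:ℂ) * y^j / (j.factorial : ℂ)) := by
        funext j
        rw [hpser, FormalMultilinearSeries.ofScalars_apply_eq, smul_eq_mul]
        ring
      rw [hfun]
      exact hsum
  have hfs := hball.factorial_smul (1:ℂ) n
  rw [hpser, FormalMultilinearSeries.ofScalars_apply_eq] at hfs
  rw [iteratedDeriv_eq_iteratedFDeriv, ← hfs, smul_eq_mul, nsmul_eq_mul]
  have hne : ((n.factorial : ℂ)) ≠ 0 := by
    exact_mod_cast n.factorial_ne_zero
  field_simp
  simp


lemma sum_ite_fin (m t : ℕ) (v : ℂ) :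
    (∑ j : Fin m, if (j:ℕ) = t then v else 0) = if t < m then v else 0 := by
  by_cases ht : t < m
  · rw [if_pos ht, Finset.sum_eq_single (⟨t, ht⟩ : Fin m)]
    · simp
    · intro j _ hj
      rw [if_neg]
      intro hc
      exact hj (Fin.ext hc)
    · intro h
      exact absurd (Finset.mem_univ _) h
  · rw [if_neg ht]
    apply Finset.sum_eq_zero
    intro j _
    rw [if_neg]
    intro hc
    exact ht (hc ▸ j.isLt)

end S9

/-- matrix representation for the higher-order Euler polynomials.
`RE_m^(p)` is the `m × m` tridiagonal matrix with diagonal entries `x - p/2`,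
subdiagonal entries `1`, and superdiagonal entry `-k(k+p-1)/4` in (1-indexed)
row `k`. For `0 ≤ n ≤ m` the `(1,1)` entry of `(RE_m^(p))^n` is `E_n^(p)(x)`,
where `E_n^(p)(x)` is given by the EGF `(2/(e^z+1))^p e^{xz} = Σ E_n^(p)(x) z^n/n!`. -/
theorem stmt_9 (p : ℕ) (hp : 1 ≤ p) (x : ℝ) (m : ℕ) (hm : 1 ≤ m)
    (E : ℕ → ℝ)
    (hE : ∀ z : ℂ, ‖z‖ < 1 →
      HasSum (fun n : ℕ => (E n : ℂ) * z ^ n / (n.factorial : ℂ))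
        ((2 / (Complex.exp z + 1)) ^ p * Complex.exp (x * z)))
    (RE : Matrix (Fin m) (Fin m) ℝ)
    (hRE : ∀ i j : Fin m, RE i j =
      if (i : ℕ) = (j : ℕ) then x - (p : ℝ) / 2
      else if (i : ℕ) = (j : ℕ) + 1 then 1
      else if (j : ℕ) = (i : ℕ) + 1 then
        -(((i : ℕ) + 1 : ℝ) * (((i : ℕ) + 1 : ℝ) + (p : ℝ) - 1)) / 4
      else 0) :
    ∀ n : ℕ, n ≤ m → (RE ^ n) ⟨0, hm⟩ ⟨0, hm⟩ = E n := by
  have main : ∀ N, N ≤ m → ∀ (k : ℕ) (hk : k < m),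
      (((RE ^ N) ⟨0, hm⟩ ⟨k, hk⟩ : ℝ) : ℂ)
        = iteratedDerivWithin N (S9.FF p x k) S9.SB 0 := by
    intro N
    induction N with
    | zero =>
      intro _ k hk
      rw [pow_zero, Matrix.one_apply, iteratedDerivWithin_zero, S9.FF_apply_zero]
      by_cases h0 : k = 0
      · subst h0
        simp
      · rw [if_neg h0, if_neg (by simp [Fin.ext_iff]; omega)]
        simp
    | succ N ih =>
      intro hNm k hk
      have hN : N ≤ m := Nat.le_of_succ_le hNm
      rw [pow_succ, Matrix.mul_apply, S9.D_rec p hp x N k]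
      push_cast
      have hterm : ∀ j : Fin m,
          (((RE ^ N) ⟨0,hm⟩ j : ℝ) : ℂ) * ((RE j ⟨k,hk⟩ : ℝ) : ℂ)
          = (if (j:ℕ) = k+1 then iteratedDerivWithin N (S9.FF p x (k+1)) S9.SB 0 else 0)
            + ((if (j:ℕ) = k then
                  ((x:ℂ)-(p:ℂ)/2) * iteratedDerivWithin N (S9.FF p x k) S9.SB 0 else 0)
            + (if (j:ℕ) = k-1 then
                  -(((k:ℂ)*((k:ℂ)+(p:ℂ)-1)/4))
                    * iteratedDerivWithin N (S9.FF p x (k-1)) S9.SB 0 else 0)) := by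
        intro j
        have hD : (((RE ^ N) ⟨0,hm⟩ j : ℝ) : ℂ)
            = iteratedDerivWithin N (S9.FF p x (j:ℕ)) S9.SB 0 := by
          have := ih hN (j:ℕ) j.isLt
          simpa using this
        rw [hD, hRE j ⟨k,hk⟩]
        simp only [apply_ite (fun r : ℝ => (r : ℂ))]
        by_cases h1 : (j:ℕ) = k
        · rw [if_pos (by simpa using h1)]
          by_cases h0 : k = 0
          · subst h0
            rw [h1]
            rw [if_neg (by omega), if_pos rfl, if_pos (by omega)]
            push_cast
            ring
          · rw [h1]
            rw [if_neg (by omega), if_pos rfl, if_neg (by omega)]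
            push_cast
            ring
        · rw [if_neg (by simpa using h1)]
          by_cases h2 : (j:ℕ) = k+1
          · rw [if_pos (by simpa using h2), if_pos h2, if_neg h1, if_neg (by omega)]
            rw [h2]
            push_cast
            ring
          · rw [if_neg (by simpa using h2), if_neg h2, if_neg h1]
            by_cases h3 : k = (j:ℕ)+1
            · rw [if_pos (by simpa using h3), if_pos (by omega)]
              have hj3 : (j:ℕ) = k-1 := by omega
              rw [hj3]
              have hc1 : ((k-1 : ℕ):ℂ) = (k:ℂ) - 1 := by
                push_cast [Nat.cast_sub (by omega : 1 ≤ k)]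
                ring
              push_cast [hc1]
              ring
            · rw [if_neg (by simpa using h3), if_neg (by omega)]
              push_cast
              ring
      rw [Finset.sum_congr rfl (fun j _ => hterm j)]
      rw [Finset.sum_add_distrib, Finset.sum_add_distrib,
        S9.sum_ite_fin, S9.sum_ite_fin, S9.sum_ite_fin]
      rw [if_pos hk, if_pos (by omega : k - 1 < m)]
      by_cases hkm : k+1 < m
      · rw [if_pos hkm]
        ring
      · rw [if_neg hkm]
        have hv : iteratedDerivWithin N (S9.FF p x (k+1)) S9.SB 0 = 0 :=
          S9.D_vanish p hp x N (k+1) (by omega)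
        rw [hv]
        ring
  intro n hn
  have h0 := main n hn 0 (by omega)
  have hE0 : iteratedDerivWithin n (S9.FF p x 0) S9.SB 0 = ((E n : ℝ) : ℂ) := by
    have hcongr : Set.EqOn (S9.FF p x 0)
        (fun z : ℂ => (2 / (Complex.exp z + 1)) ^ p * Complex.exp ((x:ℂ) * z)) S9.SB :=
      fun z hz => (S9.FF_zero_eq p x hz).symm
    rw [(iteratedDerivWithin_congr hcongr) S9.zero_mem_SB, S9.iDW_eq]
    exact S9.E_eq p x E hE n
  rw [hE0] at h0
  exact_mod_cast h0
end
end

section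
/- Fix a real number x and an integer m ≥ 1. Let RB_m be the m×m real tridiagonal matrix whose diagonal entries all equal x − 1/2, whose subdiagonal entries all equal 1, and whose superdiagonal entry in row k (1-indexed, i.e. the (k, k+1) entry, for 1 ≤ k ≤ m−1) equals −k⁴/(4(2k+1)(2k−1)). Then for every integer n with 0 ≤ n ≤ m, the (1,1) entry of the matrix power (RB_m)^n equals B_n(x). -/
open Polynomial Finset

namespace Stmt13

/-! ### The Bernoulli moment functional -/

/-- `B_n(x)` as a real number. -/
noncomputable def bv (x : ℝ) (n : ℕ) : ℝ :=
  ((Polynomial.bernoulli n).map (algebraMap ℚ ℝ)).eval x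

/-- The Bernoulli moment functional: `L(∑ aᵢ Xⁱ) = ∑ aᵢ B_i(x)`. -/
noncomputable def LB (x : ℝ) : Polynomial ℝ →ₗ[ℝ] ℝ :=
  Polynomial.lsum (fun n => LinearMap.toSpanSingleton ℝ ℝ (bv x n))

lemma LB_monomial (x : ℝ) (n : ℕ) (a : ℝ) : LB x (monomial n a) = a * bv x n := by
  simp [LB, Polynomial.lsum, Polynomial.sum_monomial_index, LinearMap.toSpanSingleton,
    smul_eq_mul]

lemma LB_X_pow (x : ℝ) (n : ℕ) : LB x ((X : ℝ[X]) ^ n) = bv x n := by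
  rw [← Polynomial.monomial_one_right_eq_X_pow, LB_monomial]; ring

lemma LB_one (x : ℝ) : LB x 1 = 1 := by
  have h := LB_X_pow x 0
  simp only [pow_zero] at h
  rw [h]
  simp [bv]

lemma LB_C_mul (x a : ℝ) (p : ℝ[X]) : LB x (C a * p) = a * LB x p := by
  rw [← smul_eq_C_mul, map_smul, smul_eq_mul]

/-! ### Translation by one: `L(p(X+1)) = L(p) + p'(x)` -/

lemma sum_choose_bernoulli (n : ℕ) :
    ∑ i ∈ range (n + 1), C (n.choose i : ℚ) * Polynomial.bernoulli i
      = Polynomial.bernoulli n + C (n : ℚ) * (X : ℚ[X]) ^ (n - 1) := by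
  induction n with
  | zero => simp
  | succ n ih =>
    have hder : derivative (∑ i ∈ range (n + 2), C ((n+1).choose i : ℚ) * Polynomial.bernoulli i
        - (Polynomial.bernoulli (n+1) + C ((n:ℚ)+1) * (X : ℚ[X]) ^ n)) = 0 := by
      rw [derivative_sub, derivative_add, derivative_sum]
      simp only [derivative_mul, derivative_C, zero_mul, zero_add,
        Polynomial.derivative_bernoulli, derivative_X_pow]
      rw [Finset.sum_range_succ']
      have hre : ∀ i ∈ range (n+1),
          C (((n+1).choose (i+1) : ℕ) : ℚ) * ((((i+1):ℕ) : ℚ[X]) * Polynomial.bernoulli (i+1-1))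
          = C ((n:ℚ)+1) * (C (n.choose i : ℚ) * Polynomial.bernoulli i) := by
        intro i _
        have h1 : (n + 1) * n.choose i = (n + 1).choose (i + 1) * (i + 1) :=
          Nat.add_one_mul_choose_eq n i
        have h3 : (C (((n+1).choose (i+1) : ℕ) : ℚ) : ℚ[X]) * (((i+1:ℕ) : ℚ[X]))
            = C ((n:ℚ)+1) * C ((n.choose i : ℕ) : ℚ) := by
          rw [← C_eq_natCast, ← C_mul, ← C_mul]
          congr 1
          push_cast
          have := congrArg (fun k : ℕ => (k : ℚ)) h1.symm
          push_cast at this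
          linarith
        simp only [Nat.add_sub_cancel]
        rw [← mul_assoc, h3, mul_assoc]
      rw [Finset.sum_congr rfl hre, ← Finset.mul_sum, ih]
      simp only [Nat.add_sub_cancel, Nat.cast_zero, zero_mul, mul_zero, add_zero,
        Nat.choose_zero_right, Nat.cast_one]
      push_cast [← C_eq_natCast]
      simp only [C_add, C_1]
      ring
    have hc := Polynomial.eq_C_of_derivative_eq_zero hder
    have hcoeff : (∑ i ∈ range (n + 2), C ((n+1).choose i : ℚ) * Polynomial.bernoulli i
        - (Polynomial.bernoulli (n+1) + C ((n:ℚ)+1) * (X : ℚ[X]) ^ n)).coeff 0 = 0 := by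
      simp only [Polynomial.coeff_zero_eq_eval_zero, eval_sub, eval_add, eval_finset_sum,
        eval_mul, eval_C, eval_pow, eval_X, Polynomial.bernoulli_eval_zero,
        Nat.choose_self, Nat.cast_one, one_mul]
      rw [Finset.sum_range_succ, _root_.sum_bernoulli (n+1)]
      simp only [Nat.choose_self, Nat.cast_one, one_mul]
      rcases Nat.eq_zero_or_pos n with h | h
      · subst h; norm_num
      · rw [if_neg (by omega), zero_pow (by omega)]
        ring
    rw [hcoeff] at hc
    have h0 : (∑ i ∈ range (n + 2), C ((n+1).choose i : ℚ) * Polynomial.bernoulli i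
        - (Polynomial.bernoulli (n+1) + C ((n:ℚ)+1) * (X : ℚ[X]) ^ n)) = 0 := by
      rw [hc]; simp
    have h1 := sub_eq_zero.mp h0
    rw [h1]
    norm_num

lemma bv_sum (x : ℝ) (n : ℕ) :
    ∑ i ∈ range (n+1), (n.choose i : ℝ) * bv x i = bv x n + n * x^(n-1) := by
  have h := congrArg (fun p : ℚ[X] => ((p.map (algebraMap ℚ ℝ)).eval x)) (sum_choose_bernoulli n)
  simp only [Polynomial.map_add, Polynomial.map_mul, Polynomial.map_pow, Polynomial.map_C,
    Polynomial.map_X, map_natCast, eval_add, eval_mul, eval_pow, eval_C, eval_X,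
    Polynomial.eval_finset_sum, map_sum] at h
  simpa [bv] using h

lemma X_add_one_pow (n : ℕ) :
    ((X + 1 : ℝ[X]))^n = ∑ i ∈ range (n+1), C (n.choose i : ℝ) * X^i := by
  rw [add_pow]
  refine Finset.sum_congr rfl fun i _ => ?_
  rw [one_pow, mul_one, mul_comm, C_eq_natCast]

lemma LB_X_add_one_pow (x : ℝ) (n : ℕ) :
    LB x ((X+1:ℝ[X])^n) = bv x n + n * x^(n-1) := by
  rw [X_add_one_pow, map_sum]
  simp only [LB_C_mul, LB_X_pow]
  exact bv_sum x n

lemma LB_comp_add_one (x : ℝ) (p : ℝ[X]) :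
    LB x (p.comp (X+1)) = LB x p + (derivative p).eval x := by
  induction p using Polynomial.induction_on' with
  | add p q hp hq => simp only [add_comp, map_add, hp, hq, derivative_add, eval_add]; ring
  | monomial n a =>
    rw [← C_mul_X_pow_eq_monomial, mul_comp, C_comp, pow_comp, X_comp, LB_C_mul,
      LB_X_add_one_pow, LB_C_mul, LB_X_pow]
    rw [C_mul_X_pow_eq_monomial, derivative_monomial, eval_monomial]
    ring

/-! ### The self-adjoint difference operator -/

/-- `U = X - x` -/
noncomputable def Uq (x : ℝ) : ℝ[X] := X - C x
/-- `Z = 2(X - x) + 1`, twice the recentered variable -/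
noncomputable def Zq (x : ℝ) : ℝ[X] := 2*X - 2*C x + 1

lemma LB_cert (x : ℝ) (f : ℝ[X]) :
    LB x ((Uq x + 1)^2 * (f.comp (X+1))) = LB x ((Uq x)^2 * f) := by
  have hcomp : (((Uq x)^2) * f).comp (X+1) = (Uq x + 1)^2 * f.comp (X+1) := by
    simp only [mul_comp, pow_comp, sub_comp, X_comp, C_comp, Uq]
    ring
  have hder : (derivative ((Uq x)^2 * f)).eval x = 0 := by
    simp [derivative_mul, derivative_pow, Uq]
  have h := LB_comp_add_one x ((Uq x)^2 * f)
  rw [hcomp, hder, add_zero] at h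
  exact h

noncomputable def Lop (x : ℝ) (f : ℝ[X]) : ℝ[X] :=
  (Uq x + 1)^2 * (f.comp (X+1) - f) + (Uq x)^2 * (f.comp (X-1) - f)
noncomputable def Mop (x : ℝ) (f : ℝ[X]) : ℝ[X] :=
  (Uq x + 1)^2 * f.comp (X+1) - (Uq x)^2 * f.comp (X-1)

lemma LB_Lop (x : ℝ) (f : ℝ[X]) : LB x (Lop x f) = 0 := by
  have h1 := LB_cert x f
  have h2 := LB_cert x (f.comp (X-1))
  have hcc : (f.comp (X-1)).comp (X+1) = f := by
    rw [Polynomial.comp_assoc]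
    simp
  rw [hcc] at h2
  unfold Lop
  rw [map_add, mul_sub, mul_sub, map_sub, map_sub, h1, h2]
  ring

lemma Lop_add (x : ℝ) (f g : ℝ[X]) : Lop x (f + g) = Lop x f + Lop x g := by
  unfold Lop; rw [add_comp, add_comp]; ring
lemma Mop_add (x : ℝ) (f g : ℝ[X]) : Mop x (f + g) = Mop x f + Mop x g := by
  unfold Mop; rw [add_comp, add_comp]; ring
lemma Lop_Cmul (x a : ℝ) (f : ℝ[X]) : Lop x (C a * f) = C a * Lop x f := by
  unfold Lop; simp only [mul_comp, C_comp]; ring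
lemma Mop_Cmul (x a : ℝ) (f : ℝ[X]) : Mop x (C a * f) = C a * Mop x f := by
  unfold Mop; simp only [mul_comp, C_comp]; ring

lemma Zq_comp_up (x : ℝ) : (Zq x).comp (X+1) = Zq x + 2 := by
  unfold Zq; simp only [add_comp, sub_comp, mul_comp, ofNat_comp, X_comp, C_comp, one_comp]
  ring
lemma Zq_comp_down (x : ℝ) : (Zq x).comp (X-1) = Zq x - 2 := by
  unfold Zq; simp only [add_comp, sub_comp, mul_comp, ofNat_comp, X_comp, C_comp, one_comp]
  ring

lemma Lop_Z (x : ℝ) (f : ℝ[X]) :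
    Lop x (Zq x * f) = Zq x * Lop x f + 2 * Mop x f := by
  unfold Lop Mop
  rw [mul_comp, mul_comp, Zq_comp_up, Zq_comp_down]
  ring

lemma Mop_Z (x : ℝ) (f : ℝ[X]) :
    Mop x (Zq x * f) = Zq x * Mop x f + 2 * Lop x f + ((Zq x)^2 + 1) * f := by
  unfold Lop Mop
  rw [mul_comp, mul_comp, Zq_comp_up, Zq_comp_down]
  have hZU : Zq x = 2 * Uq x + 1 := by unfold Zq Uq; ring
  rw [hZU]
  ring

/-! ### The orthogonal polynomials and their eigen-equations -/

/-- recurrence coefficient `e_j = j⁴/((2j-1)(2j+1))` -/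
noncomputable def ee (j : ℕ) : ℝ := (j:ℝ)^4 / ((2*(j:ℝ)-1)*(2*(j:ℝ)+1))
/-- auxiliary coefficient `δ_j = j⁴/(2j-1)` -/
noncomputable def dd (j : ℕ) : ℝ := (j:ℝ)^4 / (2*(j:ℝ)-1)
/-- eigenvalue `λ_j = j(j+1)` -/
noncomputable def lam (j : ℕ) : ℝ := (j:ℝ) * ((j:ℝ)+1)

/-- scaled orthogonal polynomials -/
noncomputable def Qp (x : ℝ) : ℕ → ℝ[X]
  | 0 => 1
  | 1 => Zq x
  | (j+2) => Zq x * Qp x (j+1) + C (ee (j+1)) * Qp x j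

lemma Qp_succ (x : ℝ) (j : ℕ) :
    Qp x (j+1) = Zq x * Qp x j + C (ee j) * Qp x (j-1) := by
  cases j with
  | zero => simp [Qp, ee]
  | succ j => rfl

/-- the two eigen-equations, jointly -/
def Eig (x : ℝ) (j : ℕ) : Prop :=
  Lop x (Qp x j) = C (lam j) * Qp x j ∧
  Mop x (Qp x j) = C ((j:ℝ)+1) * (Zq x * Qp x j) + C (dd j) * Qp x (j-1)

lemma eig_zero (x : ℝ) : Eig x 0 := by
  have h0 : dd 0 = 0 := by norm_num [dd]
  constructor
  · unfold Lop
    simp [Qp, lam]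
  · rw [show Qp x 0 = 1 from rfl, h0]
    unfold Mop Zq Uq
    push_cast
    simp only [one_comp, map_zero, zero_mul, add_zero, zero_add, C_1, one_mul, mul_one]
    ring

lemma eig_one (x : ℝ) : Eig x 1 := by
  have h1 : dd 1 = 1 := by norm_num [dd]
  constructor
  · have hl : lam 1 = 2 := by norm_num [lam]
    rw [show Qp x 1 = Zq x from rfl, hl]
    unfold Lop Zq Uq
    simp only [add_comp, sub_comp, mul_comp, ofNat_comp, X_comp, C_comp, one_comp, map_ofNat]
    ring
  · rw [show Qp x 1 = Zq x from rfl, show Qp x (1-1) = 1 from rfl, h1]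
    push_cast
    unfold Mop Zq Uq
    simp only [add_comp, sub_comp, mul_comp, ofNat_comp, X_comp, C_comp, one_comp, map_ofNat,
      C_1, one_mul, mul_one]
    norm_num
    simp only [map_ofNat]
    ring

lemma two_j_sub_one_ne (j : ℕ) : (2*(j:ℝ)-1) ≠ 0 := by
  rcases j with _ | j
  · norm_num
  · push_cast
    have : (0:ℝ) ≤ j := Nat.cast_nonneg j
    nlinarith

lemma two_j_add_one_ne (j : ℕ) : (2*(j:ℝ)+1) ≠ 0 := by positivity
lemma two_j_add_three_ne (j : ℕ) : (2*(j:ℝ)+3) ≠ 0 := by positivity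

lemma scal_s1 (j : ℕ) : lam (j+2) = lam (j+1) + 2*((j:ℝ)+2) := by
  unfold lam; push_cast; ring

lemma den1 (j : ℕ) : 2*((j:ℝ)+1)-1 ≠ 0 := by
  have h0 : (0:ℝ) ≤ j := Nat.cast_nonneg j
  intro h; nlinarith
lemma den2 (j : ℕ) : 2*((j:ℝ)+1)+1 ≠ 0 := by
  have h0 : (0:ℝ) ≤ j := Nat.cast_nonneg j
  intro h; nlinarith
lemma den3 (j : ℕ) : 2*((j:ℝ)+2)-1 ≠ 0 := by
  have h0 : (0:ℝ) ≤ j := Nat.cast_nonneg j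
  intro h; nlinarith
lemma den4 (j : ℕ) : 2*((j:ℝ)+2)+1 ≠ 0 := by
  have h0 : (0:ℝ) ≤ j := Nat.cast_nonneg j
  intro h; nlinarith

lemma scal_s2 (j : ℕ) : 2 * dd (j+1) + ee (j+1) * lam j = lam (j+2) * ee (j+1) := by
  unfold dd ee lam
  have hA := den1 j; have hB := den2 j
  push_cast
  field_simp
  ring

lemma scal_B1 (j : ℕ) : dd (j+2) = 2*lam (j+1) + 1 + dd (j+1) - 2*ee (j+1) := by
  unfold dd ee lam
  have hA := den1 j; have hB := den2 j; have hC := den3 j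
  push_cast
  field_simp
  ring

lemma scal_D (j : ℕ) : (dd (j+1) - 2*ee (j+1)) * ee j = ee (j+1) * dd j := by
  unfold dd ee
  have hA := den1 j; have hB := den2 j
  have hm := two_j_sub_one_ne j
  have h1 := two_j_add_one_ne j
  push_cast
  field_simp
  ring

lemma eig_step (x : ℝ) (j : ℕ) (h0 : Eig x j) (h1 : Eig x (j+1)) : Eig x (j+2) := by
  obtain ⟨hL0, hM0⟩ := h0
  obtain ⟨hL1, hM1⟩ := h1
  simp only [Nat.add_sub_cancel] at hM1
  have hrec : Zq x * Qp x j = Qp x (j+1) - C (ee j) * Qp x (j-1) := by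
    rw [Qp_succ x j]; ring
  have hQ2 : Qp x (j+2) = Zq x * Qp x (j+1) + C (ee (j+1)) * Qp x j := rfl
  have e1 : C ((((j+1):ℕ):ℝ)+1) = C ((j:ℝ)+2) := congrArg C (by push_cast; ring)
  have e2 : C ((((j+2):ℕ):ℝ)+1) = C ((j:ℝ)+3) := congrArg C (by push_cast; ring)
  have cLam : C (lam (j+2)) = C (lam (j+1)) + 2 * C ((j:ℝ)+2) := by
    rw [scal_s1 j, C_add, C_mul, map_ofNat]
  have c2 : 2 * C (dd (j+1)) + C (ee (j+1)) * C (lam j) = C (lam (j+2)) * C (ee (j+1)) := by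
    rw [← map_ofNat (C : ℝ →+* ℝ[X]) 2, ← C_mul, ← C_mul, ← C_add, ← C_mul]
    exact congrArg C (scal_s2 j)
  have cB1 : C (dd (j+2)) = 2 * C (lam (j+1)) + 1 + C (dd (j+1)) - 2 * C (ee (j+1)) := by
    rw [← map_ofNat (C : ℝ →+* ℝ[X]) 2, ← C_mul, ← C_mul, ← C_1, ← C_add, ← C_add, ← C_sub]
    exact congrArg C (scal_B1 j)
  have cD : (C (dd (j+1)) - 2 * C (ee (j+1))) * C (ee j) = C (ee (j+1)) * C (dd j) := by
    rw [← map_ofNat (C : ℝ →+* ℝ[X]) 2, ← C_mul, ← C_sub, ← C_mul, ← C_mul]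
    exact congrArg C (scal_D j)
  have c23 : C ((j:ℝ)+3) = C ((j:ℝ)+2) + 1 := by
    rw [← C_1, ← C_add]; exact congrArg C (by ring)
  have c12 : C ((j:ℝ)+2) = C ((j:ℝ)+1) + 1 := by
    rw [← C_1, ← C_add]; exact congrArg C (by ring)
  constructor
  · rw [hQ2, Lop_add, Lop_Cmul, Lop_Z, hL1, hL0, hM1, e1]
    linear_combination (Qp x j) * c2 - (Zq x * Qp x (j+1)) * cLam
  · show Mop x (Qp x (j+2)) = C ((((j+2):ℕ):ℝ)+1) * (Zq x * Qp x (j+2)) + C (dd (j+2)) * Qp x (j+1)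
    rw [hQ2, Mop_add, Mop_Cmul, Mop_Z, hM1, hL1, hM0, e1, e2]
    linear_combination (C (dd (j+1)) - 2*C (ee (j+1))) * hrec - (Qp x (j-1)) * cD
      - (Qp x (j+1)) * cB1
      - (Zq x^2 * Qp x (j+1) + C (ee (j+1)) * (Zq x * Qp x j)) * c23
      - (C (ee (j+1)) * (Zq x * Qp x j)) * c12

lemma eig_all (x : ℝ) (j : ℕ) : Eig x j := by
  suffices h : Eig x j ∧ Eig x (j+1) from h.1
  induction j with
  | zero => exact ⟨eig_zero x, eig_one x⟩
  | succ j ih => exact ⟨ih.2, eig_step x j ih.1 ih.2⟩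

lemma lam_ne (j : ℕ) (hj : 1 ≤ j) : lam j ≠ 0 := by
  unfold lam
  have h1 : (1:ℝ) ≤ (j:ℝ) := by exact_mod_cast hj
  intro h
  nlinarith

lemma LB_Qp_zero (x : ℝ) (j : ℕ) (hj : 1 ≤ j) : LB x (Qp x j) = 0 := by
  have h := LB_Lop x (Qp x j)
  rw [(eig_all x j).1, LB_C_mul] at h
  rcases mul_eq_zero.mp h with h' | h'
  · exact absurd h' (lam_ne j hj)
  · exact h'

/-! ### The walk coefficients and the expansion of `Xⁿ` in the `Qp` basis -/

noncomputable def cc (k : ℕ) : ℝ := -(k:ℝ)^4 / (4*(2*(k:ℝ)+1)*(2*(k:ℝ)-1))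

noncomputable def wseq (x : ℝ) : ℕ → ℕ → ℝ
  | 0, 0 => 1
  | 0, _+1 => 0
  | n+1, k => (if k = 0 then 0 else wseq x n (k-1)) + (x - 1/2) * wseq x n k
      + cc (k+1) * wseq x n (k+1)

lemma wseq_zero (x : ℝ) (k : ℕ) : wseq x 0 k = if k = 0 then 1 else 0 := by
  cases k with
  | zero => simp [wseq]
  | succ k => simp [wseq]

lemma wseq_succ (x : ℝ) (n k : ℕ) : wseq x (n+1) k
    = (if k = 0 then 0 else wseq x n (k-1)) + (x - 1/2) * wseq x n k
      + cc (k+1) * wseq x n (k+1) := rfl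

lemma wseq_gt (x : ℝ) (n : ℕ) : ∀ k, n < k → wseq x n k = 0 := by
  induction n with
  | zero => intro k hk; rw [wseq_zero, if_neg (by omega)]
  | succ n ih =>
    intro k hk
    rw [wseq_succ, ih k (by omega), ih (k+1) (by omega)]
    have h2 : ¬ (k = 0) := by omega
    rw [if_neg h2, ih (k-1) (by omega)]
    ring

/-- multiplication by `X` on the `Qp` basis -/
lemma X_mul_Qp (x : ℝ) (k : ℕ) :
    X * Qp x k = C (1/2) * Qp x (k+1) + C (x - 1/2) * Qp x k
      + C (-(ee k)/2) * Qp x (k-1) := by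
  have h2 : (2:ℝ[X]) * C (1/2) = 1 := by
    rw [show (2:ℝ[X]) = C 2 from (map_ofNat (C : ℝ →+* ℝ[X]) 2).symm, ← C_mul]
    norm_num
  have hy : C (x - 1/2) = C x - C (1/2) := C_sub
  have he2 : C (-(ee k)/2) = -(C (ee k) * C (1/2)) := by
    rw [← C_mul, ← C_neg]
    exact congrArg C (by ring)
  rw [Qp_succ x k, hy, he2]
  unfold Zq
  linear_combination (C x * Qp x k - X * Qp x k) * h2

lemma cc_eq (j : ℕ) : cc j = -(ee j) / 4 := by
  unfold cc ee
  rw [neg_div, neg_div, div_div]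
  congr 2
  ring

lemma X_pow_expand (x : ℝ) (n : ℕ) :
    (X:ℝ[X])^n = ∑ k ∈ range (n+1), C (wseq x n k / 2^k) * Qp x k := by
  induction n with
  | zero => simp [wseq_zero, Qp]
  | succ n ih =>
    rw [pow_succ, ih, Finset.sum_mul]
    have h1 : ∀ k ∈ range (n+1), (C (wseq x n k / 2^k) * Qp x k) * X
        = C (wseq x n k / 2^(k+1)) * Qp x (k+1)
          + C ((x-1/2) * wseq x n k / 2^k) * Qp x k
          + C (wseq x n k * -(ee k) / 2^(k+1)) * Qp x (k-1) := by
      intro k _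
      rw [show (C (wseq x n k / 2^k) * Qp x k) * X = C (wseq x n k / 2^k) * (X * Qp x k) from by
        ring, X_mul_Qp x k]
      rw [mul_add, mul_add, ← mul_assoc, ← mul_assoc, ← mul_assoc, ← C_mul, ← C_mul, ← C_mul]
      rw [show wseq x n k / 2^k * (1/2) = wseq x n k / 2^(k+1) from by ring,
        show wseq x n k / 2^k * (x - 1/2) = (x-1/2) * wseq x n k / 2^k from by ring,
        show wseq x n k / 2^k * (-(ee k)/2) = wseq x n k * -(ee k) / 2^(k+1) from by ring]
    rw [Finset.sum_congr rfl h1, Finset.sum_add_distrib, Finset.sum_add_distrib]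
    have hA := Finset.sum_range_succ'
      (fun k => if k = 0 then (0:ℝ[X]) else C (wseq x n (k-1) / 2^k) * Qp x k) (n+1)
    simp only [Nat.succ_ne_zero, if_false, Nat.add_sub_cancel, if_pos, add_zero] at hA
    have hD := Finset.sum_range_succ'
      (fun k => C (wseq x n k * -(ee k) / 2^(k+1)) * Qp x (k-1)) n
    have hee0 : ee 0 = 0 := by unfold ee; norm_num
    rw [hee0] at hD
    simp only [Nat.add_sub_cancel, neg_zero, mul_zero, zero_div, zero_mul, map_zero,
      add_zero] at hD
    rw [hD, ← hA]
    have hB := Finset.sum_range_succ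
      (fun k => C ((x-1/2) * wseq x n k / 2^k) * Qp x k) (n+1)
    rw [wseq_gt x n (n+1) (by omega)] at hB
    simp only [mul_zero, zero_mul, zero_div, map_zero, add_zero] at hB
    rw [← hB]
    have hD1 := Finset.sum_range_succ
      (fun k => C (wseq x n (k+1) * -(ee (k+1)) / 2^(k+1+1)) * Qp x k) n
    have hD2 := Finset.sum_range_succ
      (fun k => C (wseq x n (k+1) * -(ee (k+1)) / 2^(k+1+1)) * Qp x k) (n+1)
    rw [wseq_gt x n (n+1) (by omega)] at hD1
    rw [wseq_gt x n (n+2) (by omega)] at hD2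
    simp only [mul_zero, zero_mul, zero_div, map_zero, add_zero] at hD1 hD2
    rw [← hD1, ← hD2]
    rw [← Finset.sum_add_distrib, ← Finset.sum_add_distrib]
    refine Finset.sum_congr rfl fun k _ => ?_
    rw [wseq_succ x n k, cc_eq (k+1)]
    rcases k with _ | k
    · rw [if_pos rfl, if_pos rfl, zero_add, zero_add, ← add_mul, ← C_add]
      congr 1
      ring
    · rw [if_neg (Nat.succ_ne_zero k), if_neg (Nat.succ_ne_zero k), Nat.add_sub_cancel,
        ← add_mul, ← add_mul, ← C_add, ← C_add]
      congr 1
      ring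

/-- The main scalar identity: the `(0,0)` walk coefficient is `B_n(x)`. -/
lemma wseq_eq_bv (x : ℝ) (n : ℕ) : wseq x n 0 = bv x n := by
  have h := LB_X_pow x n
  rw [X_pow_expand, map_sum] at h
  rw [Finset.sum_eq_single 0 (fun k _ hk => by
      rw [LB_C_mul, LB_Qp_zero x k (by omega), mul_zero])
    (fun h0 => absurd (mem_range.mpr (by omega)) h0)] at h
  rw [LB_C_mul, show Qp x 0 = 1 from rfl, LB_one] at h
  simpa using h

end Stmt13

/-- matrix representation for the Bernoulli polynomials.
`RB_m` is the `m × m` tridiagonal matrix with diagonal entries `x - 1/2`,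
subdiagonal entries `1`, and superdiagonal entry `-k⁴/(4(2k+1)(2k-1))` in
(1-indexed) row `k`. For `0 ≤ n ≤ m` the `(1,1)` entry of `(RB_m)^n` is
the Bernoulli polynomial `B_n(x)`. -/
theorem stmt_13 (x : ℝ) (m : ℕ) (hm : 1 ≤ m)
    (RB : Matrix (Fin m) (Fin m) ℝ)
    (hRB : ∀ i j : Fin m, RB i j =
      if (i : ℕ) = (j : ℕ) then x - 1 / 2
      else if (i : ℕ) = (j : ℕ) + 1 then 1
      else if (j : ℕ) = (i : ℕ) + 1 then
        -(((i : ℕ) + 1 : ℝ) ^ 4 /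
          (4 * (2 * ((i : ℕ) + 1 : ℝ) + 1) * (2 * ((i : ℕ) + 1 : ℝ) - 1)))
      else 0) :
    ∀ n : ℕ, n ≤ m →
      (RB ^ n) ⟨0, hm⟩ ⟨0, hm⟩ =
        ((Polynomial.bernoulli n).map (algebraMap ℚ ℝ)).eval x := by
  classical
  open Stmt13 Finset in
  have key : ∀ N, N ≤ m → ∀ k : Fin m, (RB ^ N) k ⟨0, hm⟩ = wseq x N (k:ℕ) := by
    intro N
    induction N with
    | zero =>
      intro _ k
      rw [pow_zero, Matrix.one_apply, wseq_zero]
      by_cases h : k = ⟨0, hm⟩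
      · rw [if_pos h, if_pos (by simp [h])]
      · rw [if_neg h, if_neg (by intro hc; exact h (Fin.ext (by simpa using hc)))]
    | succ N ih =>
      intro hN k
      have hNm : N ≤ m := by omega
      have hNltm : N < m := by omega
      rw [pow_succ', Matrix.mul_apply]
      have hterm : ∀ j : Fin m, RB k j * (RB ^ N) j ⟨0, hm⟩
          = (if (k:ℕ) = (j:ℕ) then (x - 1/2) * wseq x N (j:ℕ) else 0)
            + (if (k:ℕ) = (j:ℕ)+1 then wseq x N (j:ℕ) else 0)
            + (if (j:ℕ) = (k:ℕ)+1 then cc ((k:ℕ)+1) * wseq x N (j:ℕ) else 0) := by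
        intro j
        rw [ih hNm j, hRB k j]
        have hcc : -(((k:ℕ) + 1 : ℝ)^4 /
            (4 * (2 * ((k:ℕ) + 1 : ℝ) + 1) * (2 * ((k:ℕ) + 1 : ℝ) - 1))) = cc ((k:ℕ)+1) := by
          unfold Stmt13.cc
          push_cast
          rw [neg_div]
        by_cases h1 : (k:ℕ) = (j:ℕ)
        · rw [if_pos h1, if_pos h1, if_neg (by omega), if_neg (by omega)]
          ring
        · by_cases h2 : (k:ℕ) = (j:ℕ)+1
          · rw [if_neg h1, if_neg h1, if_pos h2, if_pos h2, if_neg (by omega)]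
            ring
          · by_cases h3 : (j:ℕ) = (k:ℕ)+1
            · rw [if_neg h1, if_neg h1, if_neg h2, if_neg h2, if_pos h3, if_pos h3, hcc]
              ring
            · rw [if_neg h1, if_neg h1, if_neg h2, if_neg h2, if_neg h3, if_neg h3]
              ring
      rw [Finset.sum_congr rfl (fun j _ => hterm j), Finset.sum_add_distrib,
        Finset.sum_add_distrib]
      have hS1 : ∑ j : Fin m, (if (k:ℕ) = (j:ℕ) then (x - 1/2) * wseq x N (j:ℕ) else 0)
          = (x - 1/2) * wseq x N (k:ℕ) := by
        rw [Finset.sum_eq_single k (fun j _ hj => if_neg (fun hc => hj (Fin.ext hc.symm)))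
          (fun h => absurd (Finset.mem_univ k) h)]
        rw [if_pos rfl]
      have hS2 : ∑ j : Fin m, (if (k:ℕ) = (j:ℕ)+1 then wseq x N (j:ℕ) else 0)
          = (if (k:ℕ) = 0 then 0 else wseq x N ((k:ℕ)-1)) := by
        by_cases hk0 : (k:ℕ) = 0
        · rw [if_pos hk0]
          exact Finset.sum_eq_zero (fun j _ => if_neg (by omega))
        · rw [if_neg hk0]
          have hlt : (k:ℕ)-1 < m := by have := k.isLt; omega
          rw [Finset.sum_eq_single (⟨(k:ℕ)-1, hlt⟩ : Fin m)
            (fun j _ hj => if_neg (fun hc => hj (Fin.ext (by simp; omega))))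
            (fun h => absurd (Finset.mem_univ _) h)]
          rw [if_pos (by simp; omega)]
      have hS3 : ∑ j : Fin m, (if (j:ℕ) = (k:ℕ)+1 then cc ((k:ℕ)+1) * wseq x N (j:ℕ) else 0)
          = cc ((k:ℕ)+1) * wseq x N ((k:ℕ)+1) := by
        by_cases hk1 : (k:ℕ)+1 < m
        · rw [Finset.sum_eq_single (⟨(k:ℕ)+1, hk1⟩ : Fin m)
            (fun j _ hj => if_neg (fun hc => hj (Fin.ext (by simpa using hc))))
            (fun h => absurd (Finset.mem_univ _) h)]
          rw [if_pos (by simp)]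
        · rw [wseq_gt x N ((k:ℕ)+1) (by omega), mul_zero]
          exact Finset.sum_eq_zero (fun j _ => if_neg (fun hc => hk1 (by rw [← hc]; exact j.isLt)))
      rw [hS1, hS2, hS3, wseq_succ]
      ring
  intro n hn
  rw [key n hn ⟨0, hm⟩]
  exact Stmt13.wseq_eq_bv x n
end
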